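/- arXiv:1411.3468 — 5 statements merged into one kernel-verified Lean document; each statement's English description precedes it below -/
import Mathlib

section
/- Let A, B ∈ ℚ with 0, A, B pairwise distinct, and let E be the elliptic curve over ℚ given by Y² = X(X − A)(X − B). Assume that E(ℚ) contains no point of order 4 (so that C₂ × C₂ ≤ E(ℚ)_tors but E(ℚ)_tors contains no C₂ × C₄). Then the set of squarefree integers D with D ∉ {0,1} such that E(ℚ(√D)) contains a subgroup isomorphic to C₂ × C₄ has at most 3 elements. -/
open WeierstrassCurve WeierstrassCurve.Affine

lemma aux_int_of_ratsq {q : ℚ} {n : ℤ} (h : q ^ 2 = (n : ℚ)) : ∃ m : ℤ, m ^ 2 = n := by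
  have hden : (q ^ 2).den = 1 := by rw [h]; exact Rat.den_intCast n
  rw [Rat.den_pow] at hden
  have hd1 : q.den = 1 := by nlinarith [q.den.le_of_dvd one_pos (⟨q.den, by nlinarith⟩ : q.den ∣ 1)]
  refine ⟨q.num, ?_⟩
  have hq : (q.num : ℚ) = q := Rat.coe_int_num_of_den_eq_one hd1
  have : ((q.num ^ 2 : ℤ) : ℚ) = ((n : ℤ) : ℚ) := by push_cast [hq]; exact h
  exact_mod_cast this

lemma aux_squarefree_eq {D₁ D₂ : ℤ} (h₁ : Squarefree D₁) (h₂ : Squarefree D₂) {q : ℚ}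
    (h : (D₁ : ℚ) * (D₂ : ℚ) = q ^ 2) : D₁ = D₂ := by
  obtain ⟨m, hm⟩ := aux_int_of_ratsq (n := D₁ * D₂) (by push_cast; linarith)
  have hd : D₁ ∣ m := (h₁.dvd_pow_iff_dvd two_ne_zero).1 ⟨D₂, by linarith [hm]⟩
  obtain ⟨k, hk⟩ := hd
  have hD1 : D₁ ≠ 0 := h₁.ne_zero
  have h1 : D₂ = D₁ * k ^ 2 := by
    have : D₁ * D₂ = D₁ * (D₁ * k ^ 2) := by rw [← hm, hk]; ring
    exact mul_left_cancel₀ hD1 this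
  have hu : IsUnit k := h₂ k ⟨D₁, by rw [h1]; ring⟩
  rcases Int.isUnit_iff.mp hu with rfl | rfl <;> simp [h1]

lemma aux_not_square {D : ℤ} (hD : Squarefree D) (h1 : D ≠ 1) : ∀ q : ℚ, q ^ 2 ≠ (D : ℚ) := by
  intro q hq
  obtain ⟨m, hm⟩ := aux_int_of_ratsq hq
  have hu : IsUnit m := hD m ⟨1, by rw [← hm]; ring⟩
  rcases Int.isUnit_iff.mp hu with rfl | rfl <;> simp_all

lemma aux_class_eq {K : Type} [Field K] [Algebra ℚ K] (h2 : Module.finrank ℚ K = 2)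
    {Dq m : ℚ} (hD : ∀ q : ℚ, q ^ 2 ≠ Dq) (hm : ∀ q : ℚ, q ^ 2 ≠ m)
    {u v : K} (hu : u ^ 2 = (Dq : K)) (hv : v ^ 2 = (m : K)) :
    ∃ q : ℚ, (Dq : ℚ) * m = q ^ 2 := by
  have : CharZero K := charZero_of_injective_algebraMap (algebraMap ℚ K).injective
  have hinj : Function.Injective ((↑) : ℚ → K) := Rat.cast_injective
  have hFD : FiniteDimensional ℚ K := FiniteDimensional.of_finrank_pos (by omega)
  have hsmul : ∀ (q : ℚ) (x : K), q • x = (q : K) * x := fun q x => by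
    rw [Algebra.smul_def, eq_ratCast (algebraMap ℚ K)]
  have hu_irr : ∀ r : ℚ, u ≠ (r : K) := by
    intro r hr
    exact hD r (hinj (by push_cast; rw [← hu, hr]))
  have hv_irr : ∀ r : ℚ, v ≠ (r : K) := by
    intro r hr
    exact hm r (hinj (by push_cast; rw [← hv, hr]))
  have hdep : ¬ LinearIndependent ℚ ![1, u, v] := by
    intro hli
    have := hli.fintype_card_le_finrank
    simp [h2] at this
  rw [Fintype.not_linearIndependent_iff] at hdep
  obtain ⟨g, hg, i, hi⟩ := hdep
  have hsum : ((g 0 : ℚ) : K) + ((g 1 : ℚ) : K) * u + ((g 2 : ℚ) : K) * v = 0 := by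
    simp only [Fin.sum_univ_three, Matrix.cons_val_zero, Matrix.cons_val_one, Matrix.head_cons,
      Matrix.cons_val_two, Matrix.tail_cons, hsmul] at hg
    linear_combination hg
  have hg2 : g 2 ≠ 0 := by
    intro h20
    have hg1 : g 1 = 0 := by
      by_contra h10
      have hK1 : ((g 1 : ℚ) : K) ≠ 0 := by exact_mod_cast h10
      refine hu_irr (-(g 0) / g 1) ?_
      rw [show ((-(g 0) / g 1 : ℚ) : K) = ((-(g 0) : ℚ) : K) / ((g 1 : ℚ) : K) by push_cast; ring,
        eq_div_iff hK1]
      rw [h20] at hsum; push_cast at hsum ⊢; linear_combination hsum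
    have hg0 : g 0 = 0 := by
      rw [h20, hg1] at hsum
      push_cast at hsum
      exact_mod_cast hinj (by push_cast; simpa using hsum)
    fin_cases i <;> simp_all
  have hK2 : ((g 2 : ℚ) : K) ≠ 0 := by exact_mod_cast hg2
  have hv_eq : v = ((-(g 0) / g 2 : ℚ) : K) + ((-(g 1) / g 2 : ℚ) : K) * u := by
    have h1 : v * ((g 2 : ℚ) : K) = ((-(g 0) : ℚ) : K) + ((-(g 1) : ℚ) : K) * u := by
      push_cast; linear_combination hsum
    have h2' := congrArg (· / ((g 2 : ℚ) : K)) h1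
    simp only [mul_div_cancel_right₀ _ hK2] at h2'
    rw [h2']
    push_cast
    field_simp
  set a : ℚ := -(g 0) / g 2 with ha_def
  set b : ℚ := -(g 1) / g 2 with hb_def
  have hsq : ((m - a ^ 2 - b ^ 2 * Dq : ℚ) : K) = ((2 * a * b : ℚ) : K) * u := by
    have h1 : v ^ 2 = ((a ^ 2 + b ^ 2 * Dq : ℚ) : K) + ((2 * a * b : ℚ) : K) * u := by
      rw [hv_eq]
      push_cast
      linear_combination ((b : K))^2 * hu
    rw [hv] at h1
    push_cast at h1 ⊢
    linear_combination h1
  have hab : 2 * a * b = 0 := by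
    by_contra hab
    have habK : ((2 * a * b : ℚ) : K) ≠ 0 := by exact_mod_cast hab
    refine hu_irr ((m - a ^ 2 - b ^ 2 * Dq) / (2 * a * b)) ?_
    rw [show (((m - a ^ 2 - b ^ 2 * Dq) / (2 * a * b) : ℚ) : K)
        = ((m - a ^ 2 - b ^ 2 * Dq : ℚ) : K) / ((2 * a * b : ℚ) : K) by push_cast; ring,
      eq_comm, div_eq_iff habK, hsq, mul_comm]
  have hb : b ≠ 0 := by
    intro hb0
    refine hv_irr a ?_
    rw [hv_eq, hb0]; push_cast; ring
  have ha : a = 0 := by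
    rcases mul_eq_zero.mp hab with h | h
    · rcases mul_eq_zero.mp h with h | h
      · norm_num at h
      · exact h
    · exact absurd h hb
  have hmD : m = b ^ 2 * Dq := by
    apply hinj
    have h1 : v ^ 2 = ((b ^ 2 * Dq : ℚ) : K) := by
      rw [hv_eq, ha]
      push_cast
      linear_combination ((b : K))^2 * hu
    rw [hv] at h1
    push_cast
    push_cast at h1
    linear_combination h1
  exact ⟨b * Dq, by rw [hmD]; ring⟩

lemma aux_order4 {K : Type} [Field K] [Algebra ℚ K] [DecidableEq K]
    (A B : ℚ) (E : WeierstrassCurve ℚ) (hE : E = ⟨0, -(A + B), 0, A * B, 0⟩)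
    (P : (E.baseChange K).toAffine.Point) (hP : addOrderOf P = 4) :
    ∃ (x y : K) (hns : (E.baseChange K).toAffine.Nonsingular x y),
      addOrderOf (Point.some _ _ hns : (E.baseChange K).toAffine.Point) = 4 ∧ y ≠ 0 ∧
      y ^ 2 = x * (x - (A : K)) * (x - (B : K)) ∧
      (x ^ 2 = (A : K) * (B : K) ∨
       (x - (A : K)) ^ 2 = (A : K) * ((A : K) - (B : K)) ∨
       (x - (B : K)) ^ 2 = (B : K) * ((B : K) - (A : K))) := by
  have hCZ : CharZero K := charZero_of_injective_algebraMap (algebraMap ℚ K).injective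
  have hcast : ∀ q : ℚ, algebraMap ℚ K q = (q : K) := fun q => eq_ratCast _ q
  set W := (E.baseChange K).toAffine with hW
  have ha1 : W.a₁ = 0 := by rw [hW, hE]; simp
  have ha2 : W.a₂ = -((A : K) + (B : K)) := by
    rw [hW, hE]; show algebraMap ℚ K (-(A+B)) = _; rw [hcast]; push_cast; ring
  have ha3 : W.a₃ = 0 := by rw [hW, hE]; simp
  have ha4 : W.a₄ = (A : K) * (B : K) := by
    rw [hW, hE]; show algebraMap ℚ K (A*B) = _; rw [hcast]; push_cast; ring
  have ha6 : W.a₆ = 0 := by rw [hW, hE]; simp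
  have hnegY : ∀ x y : K, W.negY x y = -y := by
    intro x y; rw [negY, ha1, ha3]; ring
  clear P
  rename_i P
  rcases P with _ | @⟨x, y, hxy⟩
  · rw [← Point.zero_def, addOrderOf_zero] at hP; norm_num at hP
  have hy : y ≠ W.negY x y := by
    intro hy'
    have h0 : (2 : ℕ) • (Point.some _ _ hxy : (E.baseChange K).toAffine.Point) = 0 := by
      rw [two_nsmul]; exact Point.add_self_of_Y_eq hy'
    have := addOrderOf_dvd_of_nsmul_eq_zero h0
    rw [hP] at this
    norm_num at this
  have hy0 : y ≠ 0 := fun h0 => hy (by rw [hnegY, h0, neg_zero])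
  set ℓ := W.slope x x y y with hℓdef
  set x₂ := W.addX x x ℓ with hx₂def
  set y₂ := W.addY x x y ℓ with hy₂def
  have hQns : W.Nonsingular x₂ y₂ := nonsingular_add hxy hxy fun h => hy h.2
  have hadd : (Point.some _ _ hxy : (E.baseChange K).toAffine.Point) + Point.some _ _ hxy = Point.some _ _ hQns :=
    Point.add_self_of_Y_ne hy
  have h4P : (4 : ℕ) • (Point.some _ _ hxy : (E.baseChange K).toAffine.Point) = 0 := hP ▸ addOrderOf_nsmul_eq_zero _
  have hQQ : (Point.some _ _ hQns : (E.baseChange K).toAffine.Point) + Point.some _ _ hQns = 0 := by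
    rw [← hadd, show ((Point.some _ _ hxy : (E.baseChange K).toAffine.Point) + Point.some _ _ hxy) +
      ((Point.some _ _ hxy : (E.baseChange K).toAffine.Point) + Point.some _ _ hxy) = (4 : ℕ) • Point.some _ _ hxy by
        rw [show (4 : ℕ) = 2 + 2 from rfl, add_nsmul, two_nsmul], h4P]
  have hy2negY : y₂ = W.negY x₂ y₂ := by
    by_contra hne
    exact Point.some_ne_zero _ ((Point.add_self_of_Y_ne hne).symm.trans hQQ)
  have hy20 : y₂ = 0 := by
    rw [hnegY] at hy2negY
    have h2 : (2 : K) * y₂ = 0 := by linear_combination hy2negY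
    rcases mul_eq_zero.mp h2 with h | h
    · norm_num at h
    · exact h
  have heqP : y ^ 2 = x * (x - (A : K)) * (x - (B : K)) := by
    have := hxy.left
    rw [equation_iff, ha1, ha2, ha3, ha4, ha6] at this
    linear_combination this
  have heqQ : x₂ * (x₂ - (A : K)) * (x₂ - (B : K)) = 0 := by
    have := hQns.left
    rw [equation_iff, ha1, ha2, ha3, ha4, ha6, hy20] at this
    linear_combination -this
  have hsl : ℓ * (2 * y) = 3 * x ^ 2 - 2 * ((A : K) + (B : K)) * x + (A : K) * (B : K) := by
    have hs := slope_of_Y_ne (W := W) rfl hy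
    rw [ha1, ha2, ha4, hnegY] at hs
    have h2y : (2 : K) * y ≠ 0 := mul_ne_zero two_ne_zero hy0
    rw [hℓdef, hs, show y - -y = 2 * y from by ring, div_mul_cancel₀ _ h2y]
    ring
  have hx2val : x₂ = ℓ ^ 2 + ((A : K) + (B : K)) - 2 * x := by
    rw [hx₂def, addX, ha1, ha2]; ring
  refine ⟨x, y, hxy, hP, hy0, heqP, ?_⟩
  have key : ∀ e d : K,
      ((x - e) ^ 2 - d) ^ 2 = (3 * x ^ 2 - 2 * ((A : K) + (B : K)) * x
        + (A : K) * (B : K)) ^ 2 - (2 * x - ((A : K) + (B : K)) + e) * (4 * (x ^ 3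
        - ((A : K) + (B : K)) * x ^ 2 + (A : K) * (B : K) * x)) →
      x₂ = e → (x - e) ^ 2 = d := by
    intro e d hid hx2e
    have hl2 : ℓ ^ 2 = 2 * x - ((A : K) + (B : K)) + e := by
      rw [← hx2e, hx2val]; ring
    have hN : (3 * x ^ 2 - 2 * ((A : K) + (B : K)) * x + (A : K) * (B : K)) ^ 2
        = (2 * x - ((A : K) + (B : K)) + e) * (4 * y ^ 2) := by
      linear_combination (-(3 * x ^ 2 - 2 * ((A : K) + (B : K)) * x + (A : K) * (B : K))
        - ℓ * (2 * y)) * hsl + (4 * y ^ 2) * hl2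
    have hzero : ((x - e) ^ 2 - d) ^ 2 = 0 := by
      rw [hid, hN]
      linear_combination (4 * (2 * x - ((A : K) + (B : K)) + e)) * heqP
    exact sub_eq_zero.mp (pow_eq_zero_iff (two_ne_zero) |>.mp hzero)
  rcases mul_eq_zero.mp heqQ with h12 | h3
  · rcases mul_eq_zero.mp h12 with h1 | h2
    · left
      have := key 0 ((A : K) * (B : K)) (by ring) h1
      simpa using this
    · right; left
      exact key (A : K) ((A : K) * ((A : K) - (B : K))) (by ring) (sub_eq_zero.mp h2)
  · right; right
    exact key (B : K) ((B : K) * ((B : K) - (A : K))) (by ring) (sub_eq_zero.mp h3)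

lemma aux_descend (E : WeierstrassCurve ℚ) {K : Type} [Field K] [Algebra ℚ K] [DecidableEq K]
    (x y : ℚ) (h : (E.baseChange K).toAffine.Nonsingular (algebraMap ℚ K x) (algebraMap ℚ K y))
    (hord : addOrderOf (Point.some _ _ h : (E.baseChange K).toAffine.Point) = 4) :
    ∃ P : E.toAffine.Point, addOrderOf P = 4 := by
  have h₀ : (E.baseChange ℚ).toAffine.Nonsingular x y := by
    have := Affine.baseChange_nonsingular (W := E.toAffine) (f := Algebra.ofId ℚ K)
      (Algebra.ofId ℚ K).injective x y
    exact this.mp h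
  have hmap : (Point.map (W' := E) (Algebra.ofId ℚ K)) (Point.some _ _ h₀) = Point.some _ _ h := rfl
  rw [← hmap, addOrderOf_injective (Point.map (W' := E) (Algebra.ofId ℚ K))
    (Point.map_injective (W' := E) (Algebra.ofId ℚ K)) (Point.some _ _ h₀)] at hord
  have hEq : E.baseChange ℚ = E.toAffine := by
    ext <;> simp [WeierstrassCurve.map]
  exact ⟨Point.some _ _ h₀, hord⟩

open scoped Classical in
noncomputable def mval (A B e dd : ℚ) : ℚ :=
  if h : ∃ c : ℚ, c ^ 2 = dd then
    (e + h.choose) * (e + h.choose - A) * (e + h.choose - B)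
  else dd

lemma aux_slot (A B : ℚ) (hABd : A * B * (A - B) ≠ 0)
    (E : WeierstrassCurve ℚ)
    (h4 : ∀ P : E.toAffine.Point, addOrderOf P ≠ 4)
    {K : Type} [Field K] [Algebra ℚ K] [DecidableEq K] (h2 : Module.finrank ℚ K = 2)
    (D : ℤ) (hsf : Squarefree D) (h1 : D ≠ 1) (u : K) (hu : u ^ 2 = ((D : ℚ) : K))
    (e dd : ℚ) (hdd : dd ≠ 0)
    (hpart : ∀ c : ℚ, c ^ 2 = dd →
      ((e + c) * (e + c - A) * (e + c - B)) * ((e - c) * (e - c - A) * (e - c - B))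
        = (A * B * (A - B)) ^ 2)
    {x y : K} (hns : (E.baseChange K).toAffine.Nonsingular x y)
    (hord : addOrderOf (Point.some _ _ hns : (E.baseChange K).toAffine.Point) = 4)
    (hy0 : y ≠ 0) (heq : y ^ 2 = x * (x - (A : K)) * (x - (B : K)))
    (hxe : (x - (e : K)) ^ 2 = (dd : K)) :
    mval A B e dd ≠ 0 ∧ ∃ q : ℚ, (D : ℚ) * mval A B e dd = q ^ 2 := by
  have hCZ : CharZero K := charZero_of_injective_algebraMap (algebraMap ℚ K).injective
  have hcast : ∀ q : ℚ, algebraMap ℚ K q = (q : K) := fun q => eq_ratCast _ q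
  have hDq : ∀ q : ℚ, q ^ 2 ≠ (D : ℚ) := aux_not_square hsf h1
  by_cases hsq : ∃ c : ℚ, c ^ 2 = dd
  · have hc : hsq.choose ^ 2 = dd := hsq.choose_spec
    set c := hsq.choose with hcdef
    have hmv : mval A B e dd = (e + c) * (e + c - A) * (e + c - B) := by
      rw [mval, dif_pos hsq]
    rw [hmv]
    set mp := (e + c) * (e + c - A) * (e + c - B) with hmpdef
    set mm := (e - c) * (e - c - A) * (e - c - B) with hmmdef
    have hpartc : mp * mm = (A * B * (A - B)) ^ 2 := hpart c hc
    have hABd2 : (A * B * (A - B)) ^ 2 ≠ 0 := pow_ne_zero _ hABd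
    have hmp0 : mp ≠ 0 := fun h0 => hABd2 (by rw [← hpartc, h0, zero_mul])
    have hmm0 : mm ≠ 0 := fun h0 => hABd2 (by rw [← hpartc, h0, mul_zero])
    refine ⟨hmp0, ?_⟩
    have hcK : ((c : K)) ^ 2 = (dd : K) := by rw [← hc]; push_cast; ring
    have hxx : (x - ((e + c : ℚ) : K)) * (x - ((e - c : ℚ) : K)) = 0 := by
      push_cast
      linear_combination hxe - hcK
    -- a helper for both signs
    have branch : ∀ r : ℚ, x = algebraMap ℚ K r → (r * (r - A) * (r - B) ≠ 0 ∧
        ∃ q : ℚ, (D : ℚ) * (r * (r - A) * (r - B)) = q ^ 2) := by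
      intro r hxr
      subst hxr
      have hym : y ^ 2 = ((r * (r - A) * (r - B) : ℚ) : K) := by
        rw [heq, hcast]; push_cast; ring
      have hm'0 : r * (r - A) * (r - B) ≠ 0 := by
        intro h0
        apply hy0
        have : y ^ 2 = 0 := by rw [hym, h0]; simp
        exact pow_eq_zero_iff two_ne_zero |>.mp this
      refine ⟨hm'0, ?_⟩
      by_cases hms : ∃ q : ℚ, q ^ 2 = r * (r - A) * (r - B)
      · exfalso
        obtain ⟨q, hq⟩ := hms
        have hqK : ((q : K)) ^ 2 = ((r * (r - A) * (r - B) : ℚ) : K) := by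
          rw [← hq]; push_cast; ring
        have hyy : (y - algebraMap ℚ K q) * (y - algebraMap ℚ K (-q)) = 0 := by
          rw [hcast, hcast]
          push_cast
          linear_combination hym - hqK
        rcases mul_eq_zero.mp hyy with h | h
        · have hy' : y = algebraMap ℚ K q := sub_eq_zero.mp h
          subst hy'
          obtain ⟨P₀, hP₀⟩ := aux_descend E r q hns hord
          exact h4 P₀ hP₀
        · have hy' : y = algebraMap ℚ K (-q) := sub_eq_zero.mp h
          subst hy'
          obtain ⟨P₀, hP₀⟩ := aux_descend E r (-q) hns hord
          exact h4 P₀ hP₀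
      · push_neg at hms
        exact aux_class_eq h2 hDq hms hu hym
    rcases mul_eq_zero.mp hxx with h | h
    · have hxr : x = algebraMap ℚ K (e + c) := by rw [hcast]; exact sub_eq_zero.mp h
      obtain ⟨_, q, hq⟩ := branch (e + c) hxr
      exact ⟨q, by rw [hmpdef]; linear_combination hq⟩
    · have hxr : x = algebraMap ℚ K (e - c) := by rw [hcast]; exact sub_eq_zero.mp h
      obtain ⟨hm'0, q, hq⟩ := branch (e - c) hxr
      refine ⟨q * (A * B * (A - B)) / mm, ?_⟩
      have hmm' : mm = (e - c) * (e - c - A) * (e - c - B) := rfl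
      rw [div_pow, eq_div_iff (pow_ne_zero 2 hmm0)]
      have hq' : (D : ℚ) * mm = q ^ 2 := by rw [hmm']; linear_combination hq
      calc (D : ℚ) * mp * mm ^ 2 = ((D : ℚ) * mm) * (mp * mm) := by ring
        _ = q ^ 2 * (A * B * (A - B)) ^ 2 := by rw [hq', hpartc]
        _ = (q * (A * B * (A - B))) ^ 2 := by ring
  · have hmv : mval A B e dd = dd := by rw [mval, dif_neg hsq]
    rw [hmv]
    push_neg at hsq
    exact ⟨hdd, aux_class_eq h2 hDq hsq hu hxe⟩

open scoped Classical in
noncomputable def pickD (m : ℚ) : ℤ :=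
  if h : ∃ D' : ℤ, Squarefree D' ∧ D' ≠ 1 ∧ ∃ q : ℚ, (D' : ℚ) * m = q ^ 2 then h.choose else 0

lemma pickD_eq (m : ℚ) (hm : m ≠ 0) (D : ℤ) (hsf : Squarefree D) (h1 : D ≠ 1)
    (hq : ∃ q : ℚ, (D : ℚ) * m = q ^ 2) : pickD m = D := by
  have hex : ∃ D' : ℤ, Squarefree D' ∧ D' ≠ 1 ∧ ∃ q : ℚ, (D' : ℚ) * m = q ^ 2 := ⟨D, hsf, h1, hq⟩
  rw [pickD, dif_pos hex]
  obtain ⟨hsf', h1', q', hq'⟩ := hex.choose_spec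
  obtain ⟨q, hq⟩ := hq
  refine aux_squarefree_eq hsf' hsf (q := q' * q / m) ?_
  rw [div_pow, eq_div_iff (pow_ne_zero 2 hm)]
  calc (hex.choose : ℚ) * (D : ℚ) * m ^ 2 = ((hex.choose : ℚ) * m) * ((D : ℚ) * m) := by ring
    _ = q' ^ 2 * q ^ 2 := by rw [hq', hq]
    _ = (q' * q) ^ 2 := by ring

/-- Let `E : Y² = X(X - A)(X - B)` with `0, A, B` pairwise distinct, and suppose `E(ℚ)`
has no point of order `4`.  Then there are at most three squarefree integers `D ∉ {0, 1}`
such that `E(ℚ(√D))` contains a subgroup isomorphic to `C₂ × C₄`. -/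
theorem at_most_three_C2xC4_growth (A B : ℚ) (hA : A ≠ 0) (hB : B ≠ 0) (hAB : A ≠ B)
    (E : WeierstrassCurve ℚ) (hE : E = ⟨0, -(A + B), 0, A * B, 0⟩)
    (h4 : ∀ P : E.toAffine.Point, addOrderOf P ≠ 4) :
    ∃ s : Finset ℤ, s.card ≤ 3 ∧
      ∀ D : ℤ, Squarefree D → D ≠ 0 → D ≠ 1 →
        (∀ (K : Type) [Field K] [Algebra ℚ K], Module.finrank ℚ K = 2 →
          (∃ x : K, x ^ 2 = (D : K)) →
          haveI : DecidableEq K := Classical.decEq K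
          ∃ f : (ZMod 2 × ZMod 4) →+ WeierstrassCurve.Affine.Point (WeierstrassCurve.Affine.baseChange E K), Function.Injective f) →
        D ∈ s := by
  have hABd : A * B * (A - B) ≠ 0 := mul_ne_zero (mul_ne_zero hA hB) (sub_ne_zero.mpr hAB)
  refine ⟨{pickD (mval A B 0 (A * B)), pickD (mval A B A (A * (A - B))),
    pickD (mval A B B (B * (B - A)))}, ?_, ?_⟩
  · refine le_trans (Finset.card_insert_le _ _) (Nat.succ_le_succ ?_)
    refine le_trans (Finset.card_insert_le _ _) (Nat.succ_le_succ ?_)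
    simp
  intro D hsf hD0 hD1 hprop
  have hDnsq : ∀ q : ℚ, q ^ 2 ≠ (D : ℚ) := aux_not_square hsf hD1
  set p : Polynomial ℚ := Polynomial.X ^ 2 - Polynomial.C ((D : ℚ)) with hp
  have hirr : Irreducible p := by
    rw [hp]
    exact (X_pow_sub_C_irreducible_iff_of_prime Nat.prime_two).mpr hDnsq
  haveI : Fact (Irreducible p) := ⟨hirr⟩
  set K := AdjoinRoot p with hK
  letI : DecidableEq K := Classical.decEq K
  have hp0 : p ≠ 0 := hirr.ne_zero
  have hCZ : CharZero K := charZero_of_injective_algebraMap (algebraMap ℚ K).injective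
  have hcast : ∀ q : ℚ, algebraMap ℚ K q = (q : K) := fun q => eq_ratCast _ q
  have hfin : Module.finrank ℚ K = 2 := by
    rw [(AdjoinRoot.powerBasis hp0).finrank, AdjoinRoot.powerBasis_dim, hp]
    exact Polynomial.natDegree_X_pow_sub_C
  have hrootsq : (AdjoinRoot.root p) ^ 2 = ((D : ℚ) : K) := by
    have h1 : (AdjoinRoot.mk p) (Polynomial.X ^ 2 - Polynomial.C ((D : ℚ))) = 0 := by
      rw [← hp]; exact AdjoinRoot.mk_self
    rw [map_sub, map_pow, AdjoinRoot.mk_X, AdjoinRoot.mk_C, sub_eq_zero] at h1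
    rw [h1, ← AdjoinRoot.algebraMap_eq]; exact hcast _
  obtain ⟨f, hf⟩ := hprop K hfin ⟨AdjoinRoot.root p, by rw [hrootsq]; push_cast; ring⟩
  have hordP : addOrderOf (f (0, 1)) = 4 := by
    rw [addOrderOf_injective f hf (0, 1), Prod.addOrderOf]
    simp only [addOrderOf_zero, ZMod.addOrderOf_one]
    norm_num
  obtain ⟨x, yc, hns, hord4, hy0, heqc, hdisj⟩ := aux_order4 A B E hE (f (0, 1)) hordP
  rcases hdisj with h1x | h2x | h3x
  · have hxe : (x - ((0 : ℚ) : K)) ^ 2 = ((A * B : ℚ) : K) := by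
      push_cast
      linear_combination h1x
    have hpart : ∀ c : ℚ, c ^ 2 = A * B →
        ((0 + c) * (0 + c - A) * (0 + c - B)) * ((0 - c) * (0 - c - A) * (0 - c - B))
          = (A * B * (A - B)) ^ 2 := by
      intro c hc
      calc ((0 + c) * (0 + c - A) * (0 + c - B)) * ((0 - c) * (0 - c - A) * (0 - c - B))
          = -(c ^ 2 * (c ^ 2 - A ^ 2) * (c ^ 2 - B ^ 2)) := by ring
        _ = -((A * B) * ((A * B) - A ^ 2) * ((A * B) - B ^ 2)) := by rw [hc]
        _ = (A * B * (A - B)) ^ 2 := by ring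
    obtain ⟨hm0, q, hq⟩ := aux_slot A B hABd E h4 hfin D hsf hD1 (AdjoinRoot.root p) hrootsq
      0 (A * B) (mul_ne_zero hA hB) hpart hns hord4 hy0 heqc hxe
    have := pickD_eq _ hm0 D hsf hD1 ⟨q, hq⟩
    rw [← this]
    simp
  · have hxe : (x - ((A : ℚ) : K)) ^ 2 = ((A * (A - B) : ℚ) : K) := by
      push_cast
      linear_combination h2x
    have hpart : ∀ c : ℚ, c ^ 2 = A * (A - B) →
        ((A + c) * (A + c - A) * (A + c - B)) * ((A - c) * (A - c - A) * (A - c - B))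
          = (A * B * (A - B)) ^ 2 := by
      intro c hc
      calc ((A + c) * (A + c - A) * (A + c - B)) * ((A - c) * (A - c - A) * (A - c - B))
          = -(c ^ 2 * (A ^ 2 - c ^ 2) * ((A - B) ^ 2 - c ^ 2)) := by ring
        _ = -((A * (A - B)) * (A ^ 2 - A * (A - B)) * ((A - B) ^ 2 - A * (A - B))) := by rw [hc]
        _ = (A * B * (A - B)) ^ 2 := by ring
    obtain ⟨hm0, q, hq⟩ := aux_slot A B hABd E h4 hfin D hsf hD1 (AdjoinRoot.root p) hrootsq
      A (A * (A - B)) (mul_ne_zero hA (sub_ne_zero.mpr hAB)) hpart hns hord4 hy0 heqc hxe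
    have := pickD_eq _ hm0 D hsf hD1 ⟨q, hq⟩
    rw [← this]
    simp
  · have hxe : (x - ((B : ℚ) : K)) ^ 2 = ((B * (B - A) : ℚ) : K) := by
      push_cast
      linear_combination h3x
    have hpart : ∀ c : ℚ, c ^ 2 = B * (B - A) →
        ((B + c) * (B + c - A) * (B + c - B)) * ((B - c) * (B - c - A) * (B - c - B))
          = (A * B * (A - B)) ^ 2 := by
      intro c hc
      calc ((B + c) * (B + c - A) * (B + c - B)) * ((B - c) * (B - c - A) * (B - c - B))
          = -(c ^ 2 * (B ^ 2 - c ^ 2) * ((B - A) ^ 2 - c ^ 2)) := by ring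
        _ = -((B * (B - A)) * (B ^ 2 - B * (B - A)) * ((B - A) ^ 2 - B * (B - A))) := by rw [hc]
        _ = (A * B * (A - B)) ^ 2 := by ring
    obtain ⟨hm0, q, hq⟩ := aux_slot A B hABd E h4 hfin D hsf hD1 (AdjoinRoot.root p) hrootsq
      B (B * (B - A)) (mul_ne_zero hB (sub_ne_zero.mpr (sub_ne_zero.mpr hAB ∘ fun h => by linarith))) hpart hns hord4 hy0 heqc hxe
    have := pickD_eq _ hm0 D hsf hD1 ⟨q, hq⟩
    rw [← this]
    simp
end

section
/- Let F be a field of characteristic zero and let A, B, y₀ ∈ F be such that the Weierstrass curve E : Y² = X³ + AX² + BX + y₀² has nonzero discriminant, and let P = (0, y₀) ∈ E(F). Let L be a field extension of F and α ∈ L a root of the quartic polynomial q(x) = x⁴ − 2Ax² − 8y₀x + A² − 4B. Then the point Q = ((α² − A)/2, α(α² − A)/2 − y₀) lies on E(L) and satisfies 2Q = P (where 2Q denotes Q + Q in the group E(L)). -/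
open WeierstrassCurve WeierstrassCurve.Affine

private lemma some_congr {K : Type} [Field K] {W : WeierstrassCurve.Affine K}
    {x₁ y₁ x₂ y₂ : K} (hx : x₁ = x₂) (hy : y₁ = y₂)
    (h₁ : W.Nonsingular x₁ y₁) (h₂ : W.Nonsingular x₂ y₂) :
    Point.some _ _ h₁ = Point.some _ _ h₂ := by
  subst hx; subst hy; rfl

open Classical in
/-- Halving a point: let `E : Y² = X³ + AX² + BX + y₀²` be an elliptic curve over a field
`F` of characteristic zero, with the point `P = (0, y₀)`.  If `α` is a root (in a field
extension `L` of `F`) of `q(x) = x⁴ - 2Ax² - 8y₀x + A² - 4B`, then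
`Q = ((α² - A)/2, α(α² - A)/2 - y₀)` lies on `E(L)` and satisfies `2Q = P`. -/
theorem halving_point (F : Type) [Field F] [CharZero F] (A B y₀ : F)
    (E : WeierstrassCurve F) (hE : E = ⟨0, A, 0, B, y₀ ^ 2⟩) (hΔ : E.Δ ≠ 0)
    (L : Type) [Field L] [Algebra F L] (α : L)
    (hα : α ^ 4 - 2 * algebraMap F L A * α ^ 2 - 8 * algebraMap F L y₀ * α
        + algebraMap F L A ^ 2 - 4 * algebraMap F L B = 0) :
    ∃ (hP : (E.baseChange L).toAffine.Nonsingular 0 (algebraMap F L y₀))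
      (hQ : (E.baseChange L).toAffine.Nonsingular ((α ^ 2 - algebraMap F L A) / 2)
        (α * ((α ^ 2 - algebraMap F L A) / 2) - algebraMap F L y₀)),
      2 • (Point.some _ _ hQ : (E.baseChange L).toAffine.Point) = Point.some _ _ hP := by
  haveI : CharZero L := charZero_of_injective_algebraMap (algebraMap F L).injective
  set a : L := algebraMap F L A with ha
  set b : L := algebraMap F L B with hb
  set c : L := algebraMap F L y₀ with hc
  set W : WeierstrassCurve.Affine L := (E.baseChange L).toAffine with hW
  have ha1 : W.a₁ = 0 := by rw [hW, hE]; simp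
  have ha2 : W.a₂ = a := by rw [hW, hE]; simp [ha]
  have ha3 : W.a₃ = 0 := by rw [hW, hE]; simp
  have ha4 : W.a₄ = b := by rw [hW, hE]; simp [hb]
  have ha6 : W.a₆ = c ^ 2 := by rw [hW, hE, hc]; simp
  have hΔ' : W.Δ ≠ 0 := by
    rw [hW]
    show (E.map (algebraMap F L)).Δ ≠ 0
    rw [map_Δ]
    exact fun h => hΔ ((algebraMap F L).injective (by rwa [map_zero]))
  set x₁ : L := (α ^ 2 - a) / 2 with hx₁
  set y₁ : L := α * ((α ^ 2 - a) / 2) - c with hy₁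
  have hP : W.Nonsingular 0 c := by
    refine (equation_iff_nonsingular_of_Δ_ne_zero hΔ').mp ?_
    rw [equation_iff, ha1, ha2, ha3, ha4, ha6]; ring
  have hQ : W.Nonsingular x₁ y₁ := by
    refine (equation_iff_nonsingular_of_Δ_ne_zero hΔ').mp ?_
    rw [equation_iff, ha1, ha2, ha3, ha4, ha6, hx₁, hy₁]
    linear_combination ((α ^ 2 - a) / 8) * hα
  refine ⟨hP, hQ, ?_⟩
  -- `y₁ ≠ 0`
  have hy0 : y₁ ≠ 0 := by
    intro h0
    have h1 : α ^ 3 - a * α - 2 * c = 0 := by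
      rw [hy₁] at h0; linear_combination 2 * h0
    have hΔ0 : W.Δ = 0 := by
      have hexp : W.Δ = 16 * a ^ 2 * b ^ 2 - 64 * a ^ 3 * c ^ 2 - 64 * b ^ 3
          + 288 * a * b * c ^ 2 - 432 * c ^ 4 := by
        rw [show W.Δ = -W.b₂ ^ 2 * W.b₈ - 8 * W.b₄ ^ 3 - 27 * W.b₆ ^ 2 + 9 * W.b₂ * W.b₄ * W.b₆
              from rfl,
            show W.b₂ = W.a₁ ^ 2 + 4 * W.a₂ from rfl,
            show W.b₄ = 2 * W.a₄ + W.a₁ * W.a₃ from rfl,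
            show W.b₆ = W.a₃ ^ 2 + 4 * W.a₆ from rfl,
            show W.b₈ = W.a₁ ^ 2 * W.a₆ + 4 * W.a₂ * W.a₆ - W.a₁ * W.a₃ * W.a₄
              + W.a₂ * W.a₃ ^ 2 - W.a₄ ^ 2 from rfl,
            ha1, ha2, ha3, ha4, ha6]
        ring
      rw [hexp]
      linear_combination
        ((4 * a * b - 36 * c ^ 2) * α ^ 3 + (24 * b * c - 8 * a ^ 2 * c) * α ^ 2
          + (84 * a * c ^ 2 - 16 * b ^ 2 - 4 * a ^ 2 * b) * α
          + 216 * c ^ 3 - 48 * a * b * c + 8 * a ^ 3 * c) * h1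
        + ((36 * c ^ 2 - 4 * a * b) * α ^ 2 + (8 * a ^ 2 * c - 24 * b * c) * α
          + 16 * b ^ 2 - 48 * a * c ^ 2) * hα
    exact hΔ' hΔ0
  have hy : y₁ ≠ W.negY x₁ y₁ := by
    rw [negY, ha1, ha3]
    intro h
    apply hy0
    have h2 : 2 * y₁ = 0 := by linear_combination h
    have : (2 : L) ≠ 0 := two_ne_zero
    exact (mul_eq_zero.mp h2).resolve_left this
  have hslope : W.slope x₁ x₁ y₁ y₁ = α := by
    rw [slope_of_Y_ne rfl hy, div_eq_iff (sub_ne_zero.mpr hy), negY, ha1, ha2, ha3, ha4]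
    rw [hx₁, hy₁]
    linear_combination (-(1 : L) / 4) * hα
  have hx2 : W.addX x₁ x₁ (W.slope x₁ x₁ y₁ y₁) = 0 := by
    rw [addX, hslope, ha1, ha2, hx₁]; ring
  have hy2 : W.addY x₁ x₁ y₁ (W.slope x₁ x₁ y₁ y₁) = c := by
    rw [addY, negY, negAddY, addX, hslope, ha1, ha2, ha3, hx₁, hy₁]; ring
  rw [two_nsmul, Point.add_self_of_Y_ne hy]
  exact some_congr hx2 hy2 _ _
end

section
/- Let A, B ∈ ℚ and let E : Y² = X(X² + AX + B) be an elliptic curve over ℚ (nonzero discriminant) with E(ℚ)_tors isomorphic to the cyclic group C₂. Then: (i) there exists a quadratic field K (a number field with [K:ℚ] = 2) such that E(K) contains a point of order 4 if and only if B = s² for some s ∈ ℚ; and (ii) in that situation, the quadratic fields K over which E(K) contains a point of order 4 are exactly K₊ = ℚ(√(A + 2s)) and K₋ = ℚ(√(A − 2s)), and moreover K₊ ≠ K₋ (equivalently, (A+2s)(A−2s) is not a square in ℚ). -/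
open WeierstrassCurve WeierstrassCurve.Affine
open Polynomial
set_option linter.unusedSectionVars false
set_option linter.unusedVariables false
set_option maxHeartbeats 1000000
section General
variable {F : Type*} [Field F] [CharZero F] [DecidableEq F] {W : Affine F}

lemma eqn_iff (h1 : W.a₁ = 0) (h3 : W.a₃ = 0) (h6 : W.a₆ = 0) (x y : F) :
    W.Equation x y ↔ y ^ 2 = x ^ 3 + W.a₂ * x ^ 2 + W.a₄ * x := by
  rw [equation_iff, h1, h3, h6]
  constructor <;> intro h <;> linear_combination h

lemma negY_eq (h1 : W.a₁ = 0) (h3 : W.a₃ = 0) (x y : F) : W.negY x y = -y := by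
  rw [negY, h1, h3]; ring

lemma ns_of_y_ne (h1 : W.a₁ = 0) (h3 : W.a₃ = 0) {x y : F} (heq : W.Equation x y) (hy : y ≠ 0) :
    W.Nonsingular x y := by
  refine ⟨heq, Or.inr ?_⟩
  rw [evalEval_polynomialY, h1, h3]
  simpa using hy

lemma y_ne_negY (h1 : W.a₁ = 0) (h3 : W.a₃ = 0) {x y : F} (hy : y ≠ 0) :
    y ≠ W.negY x y := by
  rw [negY_eq h1 h3]
  intro h
  exact hy ((mul_eq_zero.mp (by linear_combination h : (2:F) * y = 0)).resolve_left two_ne_zero)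

lemma slope_self (h1 : W.a₁ = 0) (h3 : W.a₃ = 0) {x y : F} (hy : y ≠ 0) :
    W.slope x x y y = (3 * x ^ 2 + 2 * W.a₂ * x + W.a₄) / (2 * y) := by
  rw [slope_of_Y_ne rfl (y_ne_negY h1 h3 hy), negY_eq h1 h3, h1, sub_neg_eq_add]
  congr 1
  · ring
  · ring

lemma two_torsion_add_self (h1 : W.a₁ = 0) (h3 : W.a₃ = 0) {x : F} (h : W.Nonsingular x 0) :
    Point.some _ _ h + Point.some _ _ h = 0 :=
  Point.add_of_Y_eq rfl (by rw [negY_eq h1 h3, neg_zero])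

lemma order_eq_four (P : W.Point) (h2 : (2 : ℕ) • P ≠ 0) (h4 : (4 : ℕ) • P = 0) :
    addOrderOf P = 4 := by
  have hdvd : addOrderOf P ∣ 4 := addOrderOf_dvd_of_nsmul_eq_zero h4
  have h0 : addOrderOf P ≠ 0 := by rintro h; rw [h] at hdvd; norm_num at hdvd
  have hle : addOrderOf P ≤ 4 := Nat.le_of_dvd (by norm_num) hdvd
  have hne1 : addOrderOf P ≠ 1 := by
    intro h
    rw [AddMonoid.addOrderOf_eq_one_iff] at h
    exact h2 (by rw [h, smul_zero])
  have hne2 : addOrderOf P ≠ 2 := fun h => h2 (h ▸ addOrderOf_nsmul_eq_zero P)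
  have hne3 : addOrderOf P ≠ 3 := by rintro h; rw [h] at hdvd; norm_num at hdvd
  omega

/-- Double of a point with nonzero ordinate. -/
lemma double_eq (h1 : W.a₁ = 0) (h3 : W.a₃ = 0) {x y : F} (h : W.Nonsingular x y) (hy : y ≠ 0) :
    ∃ h' : W.Nonsingular (W.addX x x (W.slope x x y y)) (W.addY x x y (W.slope x x y y)),
      (2 : ℕ) • (Point.some _ _ h) = Point.some _ _ h' := by
  rw [two_nsmul]
  exact ⟨_, Point.add_self_of_Y_ne (y_ne_negY h1 h3 hy)⟩

lemma some_congr_s6 {x₁ y₁ x₂ y₂ : F} (h : W.Nonsingular x₁ y₁) (hx : x₁ = x₂) (hy : y₁ = y₂) :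
    ∃ h' : W.Nonsingular x₂ y₂, Point.some _ _ h = Point.some _ _ h' := by
  subst hx; subst hy; exact ⟨h, rfl⟩

/-- Construction of a point of order 4 above `(0,0)`. -/
lemma order_four_construct (h1 : W.a₁ = 0) (h3 : W.a₃ = 0) (h6 : W.a₆ = 0)
    (hB : W.a₄ ≠ 0) (t q : F) (ht2 : t ^ 2 = W.a₄) (hq2 : q ^ 2 = W.a₂ + 2 * t) (hq : q ≠ 0) :
    ∃ P : W.Point, addOrderOf P = 4 := by
  have ht : t ≠ 0 := fun h => hB (by rw [← ht2, h]; ring)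
  have heq : W.Equation t (t * q) := by
    rw [eqn_iff h1 h3 h6]
    linear_combination t ^ 2 * hq2 + t * ht2
  have hy : t * q ≠ 0 := mul_ne_zero ht hq
  have h : W.Nonsingular t (t * q) := ns_of_y_ne h1 h3 heq hy
  obtain ⟨h2, hd⟩ := double_eq h1 h3 h hy
  have hl : W.slope t t (t * q) (t * q) = q := by
    rw [slope_self h1 h3 hy]
    rw [div_eq_iff (by exact mul_ne_zero two_ne_zero hy)]
    linear_combination -ht2 - 2 * t * hq2
  have hx3 : W.addX t t (W.slope t t (t * q) (t * q)) = 0 := by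
    rw [hl, addX, h1, hq2]; ring
  have hy3 : W.addY t t (t * q) (W.slope t t (t * q) (t * q)) = 0 := by
    rw [hl, addY, negAddY, addX, negY, h1, h3, hq2]; ring
  obtain ⟨h2', hd'⟩ := some_congr_s6 h2 hx3 hy3
  refine ⟨Point.some _ _ h, order_eq_four _ ?_ ?_⟩
  · rw [hd, hd']
    exact Point.some_ne_zero _
  · have : (4 : ℕ) • Point.some _ _ h = (2 : ℕ) • Point.some _ _ h + (2 : ℕ) • Point.some _ _ h := by
      rw [← add_nsmul]
    rw [this, hd, hd', two_torsion_add_self h1 h3 h2']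

/-- Extraction: structure of a point of order 4. -/
lemma order_four_extract (h1 : W.a₁ = 0) (h3 : W.a₃ = 0) (h6 : W.a₆ = 0)
    (P : W.Point) (hP : addOrderOf P = 4) :
    ∃ (x y x₀ : F) (h : W.Nonsingular x y) (h₀ : W.Nonsingular x₀ 0),
      P = Point.some _ _ h ∧ y ≠ 0 ∧
      y ^ 2 = x ^ 3 + W.a₂ * x ^ 2 + W.a₄ * x ∧
      (2 : ℕ) • P = Point.some _ _ h₀ ∧
      x₀ * (x₀ ^ 2 + W.a₂ * x₀ + W.a₄) = 0 ∧
      (3 * x ^ 2 + 2 * W.a₂ * x + W.a₄) ^ 2 = (2 * y) ^ 2 * (W.a₂ + 2 * x + x₀) := by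
  have h4smul : (4 : ℕ) • P = 0 := by rw [← hP]; exact addOrderOf_nsmul_eq_zero P
  have hne2 : (2 : ℕ) • P ≠ 0 := by
    intro h
    have := addOrderOf_dvd_of_nsmul_eq_zero h
    rw [hP] at this
    norm_num at this
  have hne0 : P ≠ 0 := by
    rintro rfl
    exact hne2 (smul_zero _)
  obtain ⟨x, y, h⟩ : ∃ (x y : F) (h : W.Nonsingular x y), P = Point.some _ _ h := by
    cases P with
    | zero => exact absurd rfl hne0
    | some x y h => exact ⟨_, _, h, rfl⟩
  obtain ⟨h, rfl⟩ := h
  have hy : y ≠ 0 := by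
    rintro rfl
    exact hne2 (by rw [two_nsmul, two_torsion_add_self h1 h3 h])
  obtain ⟨h2, hd⟩ := double_eq h1 h3 h hy
  -- the ordinate of 2P is zero
  have hy3 : W.addY x x y (W.slope x x y y) = 0 := by
    by_contra hy3
    have h4 : (4 : ℕ) • Point.some _ _ h =
        (2 : ℕ) • Point.some _ _ h + (2 : ℕ) • Point.some _ _ h := by rw [← add_nsmul]
    rw [h4, hd, Point.add_self_of_Y_ne (y_ne_negY h1 h3 hy3)] at h4smul
    exact Point.some_ne_zero _ h4smul
  obtain ⟨h₀, hd'⟩ := some_congr_s6 h2 rfl hy3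
  have heq : y ^ 2 = x ^ 3 + W.a₂ * x ^ 2 + W.a₄ * x := (eqn_iff h1 h3 h6 x y).mp h.1
  have heq0 : (0:F) ^ 2 = (W.addX x x (W.slope x x y y)) ^ 3 +
      W.a₂ * (W.addX x x (W.slope x x y y)) ^ 2 + W.a₄ * (W.addX x x (W.slope x x y y)) :=
    (eqn_iff h1 h3 h6 _ _).mp h₀.1
  refine ⟨x, y, _, h, h₀, rfl, hy, heq, by rw [hd, hd'], by linear_combination -heq0, ?_⟩
  have hsl : W.slope x x y y = (3 * x ^ 2 + 2 * W.a₂ * x + W.a₄) / (2 * y) :=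
    slope_self h1 h3 hy
  have h2y : (2 : F) * y ≠ 0 := mul_ne_zero two_ne_zero hy
  have : W.addX x x (W.slope x x y y) =
      ((3 * x ^ 2 + 2 * W.a₂ * x + W.a₄) / (2 * y)) ^ 2 - W.a₂ - 2 * x := by
    rw [addX, hsl, h1]; ring
  rw [this]
  field_simp
  ring

/-- If a point of order 4 doubles to `(0, 0)` then `x² = a₄`. -/
lemma half_zero (x y : F) (hy : y ≠ 0)
    (heq : y ^ 2 = x ^ 3 + W.a₂ * x ^ 2 + W.a₄ * x)
    (hcl : (3 * x ^ 2 + 2 * W.a₂ * x + W.a₄) ^ 2 = (2 * y) ^ 2 * (W.a₂ + 2 * x + 0)) :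
    x ^ 2 = W.a₄ := by
  have : (x ^ 2 - W.a₄) ^ 2 = 0 := by
    linear_combination hcl + 4 * (W.a₂ + 2 * x) * heq
  exact sub_eq_zero.mp (pow_eq_zero_iff (n := 2) (by norm_num) |>.mp this)

lemma ns_two_torsion {F : Type*} [Field F] [CharZero F] {W : Affine F} {x : F} (heq : W.Equation x 0)
    (hx : 3 * x ^ 2 + 2 * W.a₂ * x + W.a₄ ≠ 0) : W.Nonsingular x 0 := by
  refine ⟨heq, Or.inl ?_⟩
  rw [evalEval_polynomialX]
  intro h
  exact hx (by linear_combination -h)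

end General

section Conj

variable {K : Type*} [Field K] [DecidableEq K] [Algebra ℚ K]

/-- a quadratic field has a nontrivial automorphism moving a generator to its conjugate -/
lemma conj_exists (hK : Module.finrank ℚ K = 2) {A B : ℚ} (x₀ : K) (hx₀ : x₀ ≠ 0)
    (hroot : x₀ ^ 2 + algebraMap ℚ K A * x₀ + algebraMap ℚ K B = 0)
    (hirr : ∀ r : ℚ, algebraMap ℚ K r ≠ x₀) :
    ∃ σ : K →ₐ[ℚ] K, σ x₀ = -(algebraMap ℚ K A) - x₀ := by
  have lin : LinearIndependent ℚ (fun i : Fin 2 => x₀ ^ (i : ℕ)) := by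
    rw [linearIndependent_fin2]
    refine ⟨by simpa using hx₀, fun a ha => ?_⟩
    simp only [Fin.isValue, Fin.val_one, pow_one, Fin.val_zero, pow_zero] at ha
    apply hirr a⁻¹
    rw [map_inv₀]
    exact (eq_inv_of_mul_eq_one_left (by rw [mul_comm, ← Algebra.smul_def]; exact ha)).symm
  have cardeq : Fintype.card (Fin 2) = Module.finrank ℚ K := by simp [hK]
  let b := basisOfLinearIndependentOfCardEqFinrank lin cardeq
  have hb : ∀ i : Fin 2, b i = x₀ ^ (i : ℕ) := fun i =>
    congrFun (coe_basisOfLinearIndependentOfCardEqFinrank lin cardeq) i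
  let pb : PowerBasis ℚ K := ⟨x₀, 2, b, hb⟩
  haveI : Module.Finite ℚ K := Module.Finite.of_basis b
  have hint : IsIntegral ℚ x₀ := IsIntegral.of_finite ℚ x₀
  have hgen : pb.gen = x₀ := rfl
  have hdim : pb.dim = 2 := rfl
  have hp : (C 1 * X ^ 2 + C A * X + C B : ℚ[X]).Monic := by
    rw [map_one, one_mul, add_assoc]
    apply monic_X_pow_add
    apply lt_of_le_of_lt (degree_add_le _ _)
    rw [max_lt_iff]
    constructor
    · exact lt_of_le_of_lt (Polynomial.degree_C_mul_X_le _) (by norm_num)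
    · exact lt_of_le_of_lt Polynomial.degree_C_le (by norm_num)
  have haev : (Polynomial.aeval x₀) (C 1 * X ^ 2 + C A * X + C B : ℚ[X]) = 0 := by
    simp only [map_add, map_mul, aeval_C, aeval_X, map_one, one_mul, map_pow]
    exact hroot
  have hmin : minpoly ℚ x₀ = C 1 * X ^ 2 + C A * X + C B := by
    refine Polynomial.eq_of_dvd_of_natDegree_le_of_leadingCoeff
      (minpoly.dvd ℚ x₀ haev) ?_ ?_
    · rw [natDegree_quadratic one_ne_zero]
      rw [show minpoly ℚ x₀ = minpoly ℚ pb.gen from rfl, pb.natDegree_minpoly, hdim]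
    · rw [(minpoly.monic hint).leadingCoeff, hp.leadingCoeff]
  have haev2 : (Polynomial.aeval (-(algebraMap ℚ K A) - x₀)) (minpoly ℚ pb.gen) = 0 := by
    rw [hgen, hmin]
    simp only [map_add, map_mul, aeval_C, aeval_X, map_one, one_mul, map_pow]
    linear_combination hroot
  exact ⟨pb.lift _ haev2, pb.lift_gen _ haev2⟩



end Conj
section Master
variable {K : Type*} [Field K] [DecidableEq K] [Algebra ℚ K]

lemma master (hK : Module.finrank ℚ K = 2)
    {A B : ℚ} (hB : B ≠ 0) (hdisc : ¬∃ d : ℚ, d ^ 2 = A ^ 2 - 4 * B)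
    {E : WeierstrassCurve ℚ} (hE : E = ⟨0, A, 0, B, 0⟩)
    (P : (E.baseChange K).toAffine.Point) (hP : addOrderOf P = 4) :
    ∃ x y : K, x ^ 2 = algebraMap ℚ K B ∧
      y ^ 2 = x ^ 3 + algebraMap ℚ K A * x ^ 2 + algebraMap ℚ K B * x ∧ y ≠ 0 := by
  haveI : CharZero K := charZero_of_injective_algebraMap (algebraMap ℚ K).injective
  revert P hP
  set φ := algebraMap ℚ K with hφ
  set W := (E.baseChange K).toAffine with hW
  intro P hP
  have h1 : W.a₁ = 0 := by simp [hW, hE]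
  have h3 : W.a₃ = 0 := by simp [hW, hE]
  have h6 : W.a₆ = 0 := by simp [hW, hE]
  have ha₂ : W.a₂ = φ A := by simp [hW, hE, hφ]
  have ha₄ : W.a₄ = φ B := by simp [hW, hE, hφ]
  -- step 1: extract the shape of P
  obtain ⟨x, y, x₀, h, h₀, hPeq, hy, heq, h2P, hx₀root, hcl⟩ :=
    order_four_extract h1 h3 h6 P hP
  by_cases hx₀ : x₀ = 0
  · -- the double of P is (0,0)
    subst hx₀
    have hxB : x ^ 2 = W.a₄ := half_zero x y hy heq (by rwa [add_zero] at hcl ⊢)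
    exact ⟨x, y, by rw [← ha₄]; exact hxB,
      by rw [← ha₂, ← ha₄]; exact heq, hy⟩
  · -- the double of P is a conjugate point (x₀, 0); pass to P + σP
    have hroot : x₀ ^ 2 + φ A * x₀ + φ B = 0 := by
      rcases mul_eq_zero.mp hx₀root with h' | h'
      · exact absurd h' hx₀
      · rw [← ha₂, ← ha₄]; exact h'
    have hirr : ∀ r : ℚ, φ r ≠ x₀ := by
      intro r hr
      apply hdisc
      refine ⟨2 * r + A, ?_⟩
      have h0 : φ (r ^ 2 + A * r + B) = 0 := by
        rw [map_add, map_add, map_pow, map_mul, hr]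
        linear_combination hroot
      have : r ^ 2 + A * r + B = 0 :=
        (algebraMap ℚ K).injective (by rw [h0, map_zero])
      linear_combination 4 * this
    obtain ⟨σ, hσ⟩ := conj_exists hK x₀ hx₀ hroot hirr
    -- the image of 2 • P under σ
    have hmap2P : Point.map (W' := E) σ ((2:ℕ) • P) = (2:ℕ) • (Point.map (W' := E) σ P) :=
      AddMonoidHom.map_nsmul _ _ _
    have hσ0 : σ (0:K) = 0 := map_zero σ
    have hmapsome := Point.map_some (S := ℚ) (W' := E) σ h₀
    obtain ⟨h₀', hcast⟩ := some_congr_s6 ((baseChange_nonsingular (W := E) σ.injective x₀ 0).mpr h₀) hσ hσ0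
    set Q : (E.baseChange K).toAffine.Point := P + Point.map (W' := E) σ P with hQ
    have h2Qa : (2:ℕ) • Q = Point.some _ _ h₀ + Point.some _ _ h₀' := by
      rw [hQ, smul_add, ← hmap2P, h2P, hmapsome, hcast]
    have hxne : x₀ ≠ -(φ A) - x₀ := by
      intro hcontra
      apply hirr (-(A/2))
      have hφ2 : φ (-(A/2)) = -(φ A)/2 := by
        rw [map_neg, map_div₀, map_ofNat]
        exact (neg_div _ _).symm
      rw [hφ2, neg_div, neg_eq_iff_eq_neg, div_eq_iff (two_ne_zero (α := K))]
      linear_combination hcontra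
    have hsl : W.slope x₀ (-(φ A) - x₀) 0 0 = 0 := by
      rw [slope_of_X_ne hxne]
      simp
    have hadd := Point.add_of_X_ne (h₁ := h₀) (h₂ := h₀') hxne
    have hax : W.addX x₀ (-(φ A) - x₀) (W.slope x₀ (-(φ A) - x₀) 0 0) = 0 := by
      rw [hsl, addX, h1, ha₂]; ring
    have hay : W.addY x₀ (-(φ A) - x₀) 0 (W.slope x₀ (-(φ A) - x₀) 0 0) = 0 := by
      rw [hsl, addY, negAddY, negY, h1, h3]; ring
    obtain ⟨h00, hcast2⟩ := some_congr_s6 (nonsingular_add h₀ h₀' (fun hc => absurd hc.1 hxne))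
      hax hay
    have h2Q : (2:ℕ) • Q = Point.some _ _ h00 := by rw [h2Qa, hadd, hcast2]
    have hQ4 : addOrderOf Q = 4 := by
      refine order_eq_four Q (by rw [h2Q]; exact Point.some_ne_zero _) ?_
      have : (4:ℕ) • Q = (2:ℕ) • Q + (2:ℕ) • Q := by rw [← add_nsmul]
      rw [this, h2Q, two_torsion_add_self h1 h3 h00]
    obtain ⟨x', y', x₀', h', h₀'', hQeq, hy', heq', h2Q', hx₀root', hcl'⟩ :=
      order_four_extract h1 h3 h6 Q hQ4
    have hss := h2Q'.symm.trans h2Q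
    simp only [_root_.WeierstrassCurve.Affine.Point.some.injEq] at hss
    obtain ⟨hx0', -⟩ := hss
    subst hx0'
    have hxB : x' ^ 2 = W.a₄ := half_zero x' y' hy' heq' (by rwa [add_zero] at hcl' ⊢)
    exact ⟨x', y', by rw [← ha₄]; exact hxB,
      by rw [← ha₂, ← ha₄]; exact heq', hy'⟩
end Master

section M1
variable {K : Type*} [Field K] [DecidableEq K] [Algebra ℚ K]

lemma B_is_square (hK : Module.finrank ℚ K = 2) {A B : ℚ} (hB : B ≠ 0)
    (hdisc : ¬∃ d : ℚ, d ^ 2 = A ^ 2 - 4 * B) (x y : K)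
    (hx : x ^ 2 = algebraMap ℚ K B)
    (hy2 : y ^ 2 = x ^ 3 + algebraMap ℚ K A * x ^ 2 + algebraMap ℚ K B * x) :
    ∃ s : ℚ, B = s ^ 2 := by
  set φ := algebraMap ℚ K with hφ
  by_contra hns
  push_neg at hns
  have hx0 : x ≠ 0 := by
    intro h
    rw [h] at hx
    exact hB ((algebraMap ℚ K).injective (by rw [← hx, map_zero]; ring))
  have hirr : ∀ r : ℚ, φ r ≠ x := by
    intro r hr
    apply hns r
    apply (algebraMap ℚ K).injective
    rw [map_pow, hr, hx]
  have lin : LinearIndependent ℚ (fun i : Fin 2 => x ^ (i : ℕ)) := by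
    rw [linearIndependent_fin2]
    refine ⟨by simpa using hx0, fun a ha => ?_⟩
    simp only [Fin.isValue, Fin.val_one, pow_one, Fin.val_zero, pow_zero] at ha
    apply hirr a⁻¹
    rw [map_inv₀]
    exact (eq_inv_of_mul_eq_one_left (by rw [mul_comm, ← Algebra.smul_def]; exact ha)).symm
  have cardeq : Fintype.card (Fin 2) = Module.finrank ℚ K := by simp [hK]
  let b := basisOfLinearIndependentOfCardEqFinrank lin cardeq
  have hb : ∀ i : Fin 2, b i = x ^ (i : ℕ) := fun i =>
    congrFun (coe_basisOfLinearIndependentOfCardEqFinrank lin cardeq) i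
  obtain ⟨u, v, huv⟩ : ∃ u v : ℚ, y = φ u + φ v * x := by
    refine ⟨b.repr y 0, b.repr y 1, ?_⟩
    have := b.sum_repr y
    rw [Fin.sum_univ_two, hb 0, hb 1] at this
    conv_lhs => rw [← this]
    simp only [Fin.val_zero, Fin.val_one, pow_zero, pow_one, Algebra.smul_def, mul_one, hφ]
  have e1 : (φ u + φ v * x) ^ 2 = x ^ 3 + φ A * x ^ 2 + φ B * x := by rw [← huv]; exact hy2
  have e2 : φ (u ^ 2 + v ^ 2 * B - A * B) = φ (2 * B - 2 * u * v) * x := by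
    simp only [map_sub, map_add, map_mul, map_pow, map_ofNat]
    linear_combination e1 + (x + φ A - (φ v) ^ 2) * hx
  by_cases hden : 2 * B - 2 * u * v = 0
  · have hnum : u ^ 2 + v ^ 2 * B - A * B = 0 := by
      apply (algebraMap ℚ K).injective
      rw [map_zero, e2, hden, map_zero, zero_mul]
    have huv' : u * v = B := by linarith
    have hu0 : u ≠ 0 := by rintro rfl; rw [zero_mul] at huv'; exact hB huv'.symm
    apply hdisc
    refine ⟨(2 * u ^ 2 - A * B) / B, ?_⟩
    have hv : v = B / u := by field_simp; linear_combination huv'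
    rw [hv] at hnum
    field_simp at hnum ⊢
    nlinarith [hnum, sq_nonneg u, sq_nonneg B]
  · apply hirr ((u ^ 2 + v ^ 2 * B - A * B) / (2 * B - 2 * u * v))
    rw [map_div₀, div_eq_iff (fun h => hden ((algebraMap ℚ K).injective (by rw [h, map_zero])))]
    rw [e2]; ring
end M1

section Tors
variable {A B : ℚ} {E : WeierstrassCurve ℚ}

lemma delta_eq (hE : E = ⟨0, A, 0, B, 0⟩) : E.Δ = 16 * B ^ 2 * (A ^ 2 - 4 * B) := by
  subst hE
  simp only [Δ, b₂, b₄, b₆, b₈]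
  norm_num
  ring

lemma B_ne_zero (hE : E = ⟨0, A, 0, B, 0⟩) (hΔ : E.Δ ≠ 0) : B ≠ 0 := by
  rw [delta_eq hE] at hΔ
  intro h; apply hΔ; rw [h]; ring

lemma disc_ne_zero (hE : E = ⟨0, A, 0, B, 0⟩) (hΔ : E.Δ ≠ 0) : A ^ 2 - 4 * B ≠ 0 := by
  rw [delta_eq hE] at hΔ
  intro h; apply hΔ; rw [h]; ring

lemma no_rat_order_four (htors : Nonempty (AddCommGroup.torsion E.toAffine.Point ≃+ ZMod 2))
    (P : E.toAffine.Point) : addOrderOf P ≠ 4 := by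
  obtain ⟨e⟩ := htors
  intro h4
  have hfin : IsOfFinAddOrder P := by
    rw [← addOrderOf_pos_iff, h4]; norm_num
  set T : AddCommGroup.torsion E.toAffine.Point := ⟨P, hfin⟩ with hT
  have h1 : addOrderOf T = 4 := by
    rw [← h4]
    exact (addOrderOf_injective (AddCommGroup.torsion E.toAffine.Point).subtype
      Subtype.coe_injective T).symm
  have h2 : addOrderOf (e T) = 4 := by
    have h' := addOrderOf_injective e.toAddMonoidHom e.injective T
    simp only [AddEquiv.coe_toAddMonoidHom] at h'
    rw [h', h1]
  have h3 : (2 : ℕ) • (e T) = 0 := by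
    have : ((2 : ℕ) : ZMod 2) = 0 := by decide
    rw [nsmul_eq_mul, this, zero_mul]
  have := addOrderOf_dvd_of_nsmul_eq_zero h3
  rw [h2] at this
  norm_num at this

lemma disc_not_square (hE : E = ⟨0, A, 0, B, 0⟩) (hΔ : E.Δ ≠ 0)
    (htors : Nonempty (AddCommGroup.torsion E.toAffine.Point ≃+ ZMod 2)) :
    ¬∃ d : ℚ, d ^ 2 = A ^ 2 - 4 * B := by
  obtain ⟨e⟩ := htors
  rintro ⟨d, hd⟩
  have hB : B ≠ 0 := B_ne_zero hE hΔ
  have hAB : A ^ 2 - 4 * B ≠ 0 := disc_ne_zero hE hΔ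
  have hd0 : d ≠ 0 := by rintro rfl; rw [← hd] at hAB; exact hAB (by ring)
  have h1 : E.toAffine.a₁ = 0 := by rw [hE]
  have h3 : E.toAffine.a₃ = 0 := by rw [hE]
  have h6 : E.toAffine.a₆ = 0 := by rw [hE]
  have ha₂ : E.toAffine.a₂ = A := by rw [hE]
  have ha₄ : E.toAffine.a₄ = B := by rw [hE]
  set r : ℚ := (-A + d) / 2 with hr
  have hr0 : r ≠ 0 := by
    rw [hr]
    intro h
    rw [_root_.div_eq_zero_iff] at h
    rcases h with h | h
    · have : d = A := by linarith
      rw [this] at hd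
      apply hB; nlinarith [hd]
    · norm_num at h
  have hrroot : r ^ 2 + A * r + B = 0 := by
    rw [hr]; field_simp; nlinarith [hd]
  -- the two 2-torsion points
  have heq0 : E.toAffine.Equation 0 0 := by
    rw [eqn_iff h1 h3 h6]; ring
  have heqr : E.toAffine.Equation r 0 := by
    rw [eqn_iff h1 h3 h6, ha₂, ha₄]
    linear_combination -r * hrroot
  have hns0 : E.toAffine.Nonsingular 0 0 := by
    apply ns_two_torsion heq0
    rw [ha₂, ha₄]
    simpa using hB
  have hnsr : E.toAffine.Nonsingular r 0 := by
    apply ns_two_torsion heqr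
    rw [ha₂, ha₄]
    have : 3 * r ^ 2 + 2 * A * r + B = r * d := by
      rw [hr]; field_simp; nlinarith [hd]
    rw [this]
    exact mul_ne_zero hr0 hd0
  set P0 : E.toAffine.Point := Point.some _ _ hns0 with hP0
  set Pr : E.toAffine.Point := Point.some _ _ hnsr with hPr
  have hfin0 : IsOfFinAddOrder P0 := by
    rw [isOfFinAddOrder_iff_nsmul_eq_zero]
    exact ⟨2, by norm_num, by rw [two_nsmul]; exact two_torsion_add_self h1 h3 hns0⟩
  have hfinr : IsOfFinAddOrder Pr := by
    rw [isOfFinAddOrder_iff_nsmul_eq_zero]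
    exact ⟨2, by norm_num, by rw [two_nsmul]; exact two_torsion_add_self h1 h3 hnsr⟩
  set T0 : AddCommGroup.torsion E.toAffine.Point := ⟨P0, hfin0⟩ with hT0
  set Tr : AddCommGroup.torsion E.toAffine.Point := ⟨Pr, hfinr⟩ with hTr
  have hne0 : e T0 ≠ 0 := by
    intro h
    have : T0 = 0 := e.injective (by rw [h, map_zero])
    have : P0 = 0 := by rw [hT0] at this; exact congrArg Subtype.val this
    exact Point.some_ne_zero hns0 this
  have hner : e Tr ≠ 0 := by
    intro h
    have : Tr = 0 := e.injective (by rw [h, map_zero])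
    have : Pr = 0 := by rw [hTr] at this; exact congrArg Subtype.val this
    exact Point.some_ne_zero hnsr this
  have : e T0 = e Tr := by
    have : ∀ a b : ZMod 2, a ≠ 0 → b ≠ 0 → a = b := by decide
    exact this _ _ hne0 hner
  have hTT : T0 = Tr := e.injective this
  have hPP : P0 = Pr := congrArg Subtype.val hTT
  rw [hP0, hPr] at hPP
  simp only [_root_.WeierstrassCurve.Affine.Point.some.injEq] at hPP
  exact hr0 hPP.1.symm
end Tors

lemma exists_quadratic_ext (c2 : ℚ) (hns : ¬∃ q : ℚ, q ^ 2 = c2) :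
    ∃ (K : IntermediateField ℚ ℂ) (x : K), Module.finrank ℚ K = 2 ∧
      x ^ 2 = algebraMap ℚ K c2 := by
  obtain ⟨c, hc⟩ : ∃ c : ℂ, c ^ 2 = (c2 : ℂ) :=
    IsAlgClosed.exists_pow_nat_eq (c2 : ℂ) zero_lt_two
  have hmonic : (Polynomial.X ^ 2 - Polynomial.C c2).Monic :=
    Polynomial.monic_X_pow_sub_C c2 (by norm_num)
  have hirr : Irreducible (Polynomial.X ^ 2 - Polynomial.C c2) :=
    X_pow_sub_C_irreducible_of_prime Nat.prime_two (fun b hb => hns ⟨b, hb⟩)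
  have hroot : Polynomial.aeval c (Polynomial.X ^ 2 - Polynomial.C c2) = 0 := by
    simp only [map_sub, map_pow, Polynomial.aeval_X, Polynomial.aeval_C]
    rw [hc, sub_eq_zero]
    norm_cast
  have hint : IsIntegral ℚ c := ⟨_, hmonic, by rwa [← Polynomial.aeval_def]⟩
  have hmin : minpoly ℚ c = Polynomial.X ^ 2 - Polynomial.C c2 :=
    (minpoly.eq_of_irreducible_of_monic hirr hroot hmonic).symm
  refine ⟨IntermediateField.adjoin ℚ {c},
    ⟨c, IntermediateField.mem_adjoin_simple_self ℚ c⟩, ?_, ?_⟩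
  · rw [IntermediateField.adjoin.finrank hint, hmin, Polynomial.natDegree_X_pow_sub_C]
  · apply Subtype.ext
    push_cast
    rw [eq_ratCast (algebraMap ℚ _) c2]
    push_cast
    exact hc

section Wrap
variable {K : Type*} [Field K] [DecidableEq K] [Algebra ℚ K]

lemma construct_EK {A B : ℚ} {E : WeierstrassCurve ℚ} (hE : E = ⟨0, A, 0, B, 0⟩)
    (hB : B ≠ 0) (t : ℚ) (ht2 : t ^ 2 = B) (x : K)
    (hx : x ^ 2 = algebraMap ℚ K (A + 2 * t)) (hAt : A + 2 * t ≠ 0) :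
    ∃ P : (E.baseChange K).toAffine.Point, addOrderOf P = 4 := by
  haveI : CharZero K := charZero_of_injective_algebraMap (algebraMap ℚ K).injective
  set φ := algebraMap ℚ K with hφ
  set W := (E.baseChange K).toAffine with hW
  have h1 : W.a₁ = 0 := by simp [hW, hE]
  have h3 : W.a₃ = 0 := by simp [hW, hE]
  have h6 : W.a₆ = 0 := by simp [hW, hE]
  have ha₂ : W.a₂ = φ A := by simp [hW, hE, hφ]
  have ha₄ : W.a₄ = φ B := by simp [hW, hE, hφ]
  apply order_four_construct h1 h3 h6 (t := φ t) (q := x)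
  · rw [ha₄]
    exact fun hc => hB ((algebraMap ℚ K).injective (by rw [hc, map_zero]))
  · rw [ha₄, ← map_pow, ht2]
  · rw [ha₂, hx, map_add, map_mul, map_ofNat]
  · exact fun hc => hAt ((algebraMap ℚ K).injective
      (by rw [map_zero, ← hx, hc]; ring))

lemma forward_sqrt (hK : Module.finrank ℚ K = 2) {A B s : ℚ} (hB : B ≠ 0)
    (hdisc : ¬∃ d : ℚ, d ^ 2 = A ^ 2 - 4 * B) {E : WeierstrassCurve ℚ}
    (hE : E = ⟨0, A, 0, B, 0⟩) (hBs : B = s ^ 2)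
    (P : (E.baseChange K).toAffine.Point) (hP : addOrderOf P = 4) :
    (∃ x : K, x ^ 2 = algebraMap ℚ K (A + 2 * s)) ∨
      (∃ x : K, x ^ 2 = algebraMap ℚ K (A - 2 * s)) := by
  obtain ⟨x, y, hx, hy2, hy⟩ := master hK hB hdisc hE P hP
  set φ := algebraMap ℚ K with hφ
  have hs0 : s ≠ 0 := fun h => hB (by rw [hBs, h]; ring)
  have hφs : (φ s) ≠ 0 := fun h => hs0 ((algebraMap ℚ K).injective (by rw [h, map_zero]))
  have hsq : (φ s) ^ 2 = φ B := by rw [← map_pow, ← hBs]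
  have hfact : (x - φ s) * (x + φ s) = 0 := by linear_combination hx - hsq
  rcases mul_eq_zero.mp hfact with hc | hc
  · left
    have hxv : x = φ s := by linear_combination hc
    refine ⟨y / φ s, ?_⟩
    rw [div_pow, hy2, hxv, map_add, map_mul, map_ofNat]
    rw [div_eq_iff (pow_ne_zero 2 hφs)]
    linear_combination (-(φ s)) * hsq
  · right
    have hxv : x = -φ s := by linear_combination hc
    refine ⟨y / φ s, ?_⟩
    rw [div_pow, hy2, hxv, map_sub, map_mul, map_ofNat]
    rw [div_eq_iff (pow_ne_zero 2 hφs)]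
    linear_combination (φ s) * hsq
end Wrap

section RatBullets
variable {A B : ℚ} {E : WeierstrassCurve ℚ}

lemma not_sq_t (hE : E = ⟨0, A, 0, B, 0⟩) (hΔ : E.Δ ≠ 0)
    (htors : Nonempty (AddCommGroup.torsion E.toAffine.Point ≃+ ZMod 2))
    (t : ℚ) (ht2 : t ^ 2 = B) : ¬∃ q : ℚ, q ^ 2 = A + 2 * t := by
  rintro ⟨q, hq⟩
  have hB : B ≠ 0 := B_ne_zero hE hΔ
  have hdisc : A ^ 2 - 4 * B ≠ 0 := disc_ne_zero hE hΔ
  have hAt : A + 2 * t ≠ 0 := by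
    intro h
    apply hdisc
    have hfac : A ^ 2 - 4 * B = (A - 2 * t) * (A + 2 * t) := by linear_combination 4 * ht2
    rw [hfac, h, mul_zero]
  have hq0 : q ≠ 0 := by
    intro h
    rw [h] at hq
    exact hAt (by linarith [hq])
  have h1 : E.toAffine.a₁ = 0 := by rw [hE]
  have h3 : E.toAffine.a₃ = 0 := by rw [hE]
  have h6 : E.toAffine.a₆ = 0 := by rw [hE]
  have ha₂ : E.toAffine.a₂ = A := by rw [hE]
  have ha₄ : E.toAffine.a₄ = B := by rw [hE]
  obtain ⟨P, hP⟩ := order_four_construct h1 h3 h6 (by rw [ha₄]; exact hB) t q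
    (by rw [ha₄]; exact ht2) (by rw [ha₂]; exact hq) hq0
  exact no_rat_order_four htors P hP
end RatBullets


open Classical in
/-- Let `E : Y² = X(X² + AX + B)` be an elliptic curve over `ℚ` with `E(ℚ)_tors ≅ C₂`.
(i) There exists a quadratic field `K` such that `E(K)` has a point of order `4` iff
`B = s²` for some `s ∈ ℚ`.  (ii) In that case `A + 2s` and `A - 2s` are rational
nonsquares, a quadratic field `K` acquires a point of order `4` exactly when it contains
a square root of `A + 2s` or of `A - 2s` (i.e. `K = ℚ(√(A + 2s))` or `K = ℚ(√(A - 2s))`),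
and these two fields are distinct (equivalently `(A + 2s)(A - 2s)` is not a square). -/
theorem order_four_growth_of_C2 (A B : ℚ) (E : WeierstrassCurve ℚ)
    (hE : E = ⟨0, A, 0, B, 0⟩) (hΔ : E.Δ ≠ 0)
    (htors : Nonempty (AddCommGroup.torsion E.toAffine.Point ≃+ ZMod 2)) :
    ((∃ K : IntermediateField ℚ ℂ, Module.finrank ℚ K = 2 ∧
        ∃ P : (E.baseChange K).toAffine.Point, addOrderOf P = 4) ↔ ∃ s : ℚ, B = s ^ 2) ∧
    ∀ s : ℚ, B = s ^ 2 →
      (¬ ∃ q : ℚ, q ^ 2 = A + 2 * s) ∧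
      (¬ ∃ q : ℚ, q ^ 2 = A - 2 * s) ∧
      (¬ ∃ q : ℚ, q ^ 2 = (A + 2 * s) * (A - 2 * s)) ∧
      (∀ (K : Type) [Field K] [Algebra ℚ K], Module.finrank ℚ K = 2 →
        ((∃ P : (E.baseChange K).toAffine.Point, addOrderOf P = 4) ↔
          ((∃ x : K, x ^ 2 = algebraMap ℚ K (A + 2 * s)) ∨
            (∃ x : K, x ^ 2 = algebraMap ℚ K (A - 2 * s))))) := by
  have hB : B ≠ 0 := B_ne_zero hE hΔ
  have hdiscne : A ^ 2 - 4 * B ≠ 0 := disc_ne_zero hE hΔ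
  have hdisc : ¬∃ d : ℚ, d ^ 2 = A ^ 2 - 4 * B := disc_not_square hE hΔ htors
  constructor
  · constructor
    · rintro ⟨K, hK2, P, hP⟩
      obtain ⟨x, y, hx, hy2, hy⟩ := master hK2 hB hdisc hE P hP
      exact B_is_square hK2 hB hdisc x y hx hy2
    · rintro ⟨s, hBs⟩
      have hns : ¬∃ q : ℚ, q ^ 2 = A + 2 * s := not_sq_t hE hΔ htors s hBs.symm
      have hAt : A + 2 * s ≠ 0 := by
        intro h
        apply hdiscne
        have hfac : A ^ 2 - 4 * B = (A - 2 * s) * (A + 2 * s) := by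
          linear_combination 4 * hBs.symm
        rw [hfac, h, mul_zero]
      obtain ⟨K, x, hK2, hx⟩ := exists_quadratic_ext (A + 2 * s) hns
      obtain ⟨P, hP⟩ := construct_EK hE hB s hBs.symm x hx hAt
      exact ⟨K, hK2, P, hP⟩
  · intro s hBs
    have hAp : A + 2 * s ≠ 0 := by
      intro h
      apply hdiscne
      have hfac : A ^ 2 - 4 * B = (A - 2 * s) * (A + 2 * s) := by
        linear_combination 4 * hBs.symm
      rw [hfac, h, mul_zero]
    have hAm : A - 2 * s ≠ 0 := by
      intro h
      apply hdiscne
      have hfac : A ^ 2 - 4 * B = (A - 2 * s) * (A + 2 * s) := by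
        linear_combination 4 * hBs.symm
      rw [hfac, h, zero_mul]
    refine ⟨not_sq_t hE hΔ htors s hBs.symm, ?_, ?_, ?_⟩
    · rintro ⟨q, hq⟩
      exact not_sq_t hE hΔ htors (-s) (by rw [hBs]; ring) ⟨q, by linarith [hq]⟩
    · rintro ⟨q, hq⟩
      exact hdisc ⟨q, by linear_combination hq + 4 * hBs⟩
    · intro K _ _ hK2
      constructor
      · rintro ⟨P, hP⟩
        exact forward_sqrt hK2 hB hdisc hE hBs P hP
      · rintro (⟨x, hx⟩ | ⟨x, hx⟩)
        · exact construct_EK hE hB s hBs.symm x hx hAp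
        · refine construct_EK hE hB (-s) (by rw [hBs]; ring) x ?_
            (by rw [show A + 2 * -s = A - 2 * s by ring]; exact hAm)
          rw [show A + 2 * -s = A - 2 * s by ring]
          exact hx
end

section
/- The only rational points on the curve z² = (s² + 2s − 1)(s² − 2s − 1) are the trivial ones: if s, z ∈ ℚ satisfy z² = (s² + 2s − 1)(s² − 2s − 1), then s = 0 (and z = ±1). -/
private lemma coprime_shift {P Q : ℤ} (h : IsCoprime (Q - P) (Q + P)) : IsCoprime P Q := by
  obtain ⟨u, v, huv⟩ := h
  exact ⟨v - u, u + v, by linear_combination huv⟩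

private lemma mod16 : ∀ x y z : ZMod 16, (2*x+1)^4 + y^2 ≠ (2*z)^4 := by decide

private lemma cast_natAbs_pow4 (v : ℤ) : ((v.natAbs : ℤ)) ^ 4 = v ^ 4 := by
  have h1 : ((v ^ 4).natAbs : ℤ) = v ^ 4 := Int.natAbs_of_nonneg (by positivity)
  rw [← h1, Int.natAbs_pow]
  push_cast
  ring

private lemma natAbs_lt_of_pow4 {v c : ℤ} (h : v ^ 4 < c ^ 4) : v.natAbs < c.natAbs := by
  by_contra hle
  push_neg at hle
  have h1 : (c.natAbs : ℤ) ^ 4 ≤ (v.natAbs : ℤ) ^ 4 := by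
    exact_mod_cast Nat.pow_le_pow_left hle 4
  rw [cast_natAbs_pow4, cast_natAbs_pow4] at h1
  omega

set_option maxHeartbeats 2000000 in
private lemma descent : ∀ n : ℕ, ∀ a b c : ℤ, c.natAbs = n → a ≠ 0 → b ≠ 0 →
    a ^ 4 + b ^ 2 = c ^ 4 → False := by
  intro n
  induction n using Nat.strong_induction_on with
  | _ n ih =>
  intro a b c hn ha hb heq
  have ha4 : 0 < a ^ 4 := by positivity
  have hb2 : 0 < b ^ 2 := by positivity
  have hc : c ≠ 0 := by rintro rfl; simp at heq; nlinarith
  by_cases hg1 : Int.gcd a c = 1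
  · have hco : IsCoprime a c := Int.isCoprime_iff_gcd_eq_one.mpr hg1
    rcases Int.even_or_odd c with hce | hcodd
    · -- c even forces a odd, then contradiction mod 16
      have haodd : Odd a := by
        rcases Int.even_or_odd a with hae | hao
        · exfalso
          have : IsUnit (2:ℤ) := hco.isUnit_of_dvd' hae.two_dvd hce.two_dvd
          rw [Int.isUnit_iff] at this
          omega
        · exact hao
      obtain ⟨k, hk⟩ := haodd
      obtain ⟨m, hm⟩ := hce
      refine mod16 (k : ZMod 16) (b : ZMod 16) (m : ZMod 16) ?_
      have hcast : ((a : ZMod 16))^4 + (b : ZMod 16)^2 = ((c : ZMod 16))^4 := by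
        exact_mod_cast congrArg (fun x : ℤ => (x : ZMod 16)) heq
      rw [hk, hm] at hcast
      push_cast at hcast
      linear_combination hcast
    · rcases Int.even_or_odd a with hae | haodd
      · -- case (iii): a even, b odd
        obtain ⟨a₀, ha₀⟩ := id hae
        have ha₀0 : a₀ ≠ 0 := by rintro rfl; simp at ha₀; exact ha ha₀
        have hbodd : Odd b := by
          rcases Int.even_or_odd b with h | h
          · exfalso
            have h2 : Even (b^2) := Int.even_pow.mpr ⟨h, by norm_num⟩
            have h3 : Odd (b^2) := by
              have hb2eq : b^2 = c^4 - a^4 := by linarith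
              rw [hb2eq]
              exact (hcodd.pow).sub_even (Int.even_pow.mpr ⟨hae, by norm_num⟩)
            exact (Int.not_odd_iff_even.mpr h2) h3
          · exact h
        obtain ⟨P, hP⟩ : Even (c^2 - b) := (hcodd.pow).sub_odd hbodd
        obtain ⟨Q, hQ⟩ : Even (c^2 + b) := (hcodd.pow).add_odd hbodd
        have hQP1 : Q - P = b := by linarith
        have hQP2 : Q + P = c^2 := by linarith
        have hbc : IsCoprime b c := by
          have h4 : IsCoprime (-(a^4) + c * c^3) c :=
            ((hco.pow_left (m := 4)).neg_left).add_mul_left_left _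
          have hb2eq : b^2 = -(a^4) + c * c^3 := by linear_combination heq
          rw [← hb2eq] at h4
          exact (IsCoprime.pow_left_iff (by norm_num)).mp h4
        have hcoPQ : IsCoprime P Q := coprime_shift (by rw [hQP1, hQP2]; exact hbc.pow_right)
        have h1 : P * Q = (2*a₀^2)^2 := by
          apply mul_left_cancel₀ (show (4:ℤ) ≠ 0 by norm_num)
          have hPQprod : (c^2-b)*(c^2+b) = (P+P)*(Q+Q) := by rw [hP, hQ]
          have haa : a*a*(a*a) = (a₀+a₀)*(a₀+a₀)*((a₀+a₀)*(a₀+a₀)) := by rw [ha₀]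
          linear_combination -hPQprod - heq + haa
        have hc2pos : 0 < c^2 := by positivity
        have hb2lt : b^2 < (c^2)^2 := by nlinarith
        have hPpos : 0 < P := by nlinarith
        have hQpos : 0 < Q := by nlinarith
        obtain ⟨s, hs'⟩ := Int.sq_of_isCoprime hcoPQ h1
        have hPs : P = s^2 := by
          rcases hs' with h|h
          · exact h
          · exfalso; linarith [sq_nonneg s]
        obtain ⟨t, ht'⟩ := Int.sq_of_isCoprime hcoPQ.symm (by rw [mul_comm]; exact h1)
        have hQt : Q = t^2 := by
          rcases ht' with h|h
          · exact h
          · exfalso; linarith [sq_nonneg t]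
        have hst : IsCoprime s t := by
          have hPQ2 := hcoPQ
          rw [hPs, hQt] at hPQ2
          exact (IsCoprime.pow_iff (by norm_num) (by norm_num)).mp hPQ2
        have hPT : PythagoreanTriple s t c := by
          show s*s + t*t = c*c
          linear_combination hQP2 - hPs - hQt
        obtain ⟨m, n, harr, hczz, hmn_gcd, hparity⟩ :=
          PythagoreanTriple.coprime_classification.mp ⟨hPT, Int.isCoprime_iff_gcd_eq_one.mp hst⟩
        have hk2 : (m*n*(m^2-n^2))^2 = (a₀^2)^2 := by
          apply mul_left_cancel₀ (show (4:ℤ) ≠ 0 by norm_num)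
          rcases harr with ⟨hs2,ht2⟩|⟨hs2,ht2⟩
          · rw [hs2] at hPs; rw [ht2] at hQt
            linear_combination h1 - Q * hPs - (m^2-n^2)^2 * hQt
          · rw [hs2] at hPs; rw [ht2] at hQt
            linear_combination h1 - Q * hPs - (2*m*n)^2 * hQt
        have hk0 : m*n*(m^2-n^2) ≠ 0 := by
          intro h0
          rw [h0] at hk2
          have : a₀^4 = 0 := by linear_combination -hk2
          exact ha₀0 (pow_eq_zero_iff (by norm_num) |>.mp this)
        have hm0 : m ≠ 0 := by intro h0; apply hk0; rw [h0]; ring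
        have hn0 : n ≠ 0 := by intro h0; apply hk0; rw [h0]; ring
        have hmn20 : m^2 - n^2 ≠ 0 := by intro h0; apply hk0; rw [h0]; ring
        have hmn : IsCoprime m n := Int.isCoprime_iff_gcd_eq_one.mpr hmn_gcd
        have hcop1 : IsCoprime (m*n) (m^2-n^2) := by
          have h5 : IsCoprime m (m^2-n^2) := by
            have h6 : IsCoprime m (-(n^2) + m*m) :=
              ((hmn.pow_right (n := 2)).neg_right).add_mul_left_right m
            rwa [show -(n^2) + m*m = m^2 - n^2 by ring] at h6
          have h7 : IsCoprime n (m^2-n^2) := by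
            have h8 : IsCoprime n (m^2 + n*(-n)) :=
              (hmn.symm.pow_right (n := 2)).add_mul_left_right (-n)
            rwa [show m^2 + n*(-n) = m^2 - n^2 by ring] at h8
          exact h5.mul_left h7
        have hk_eq : m*n*(m^2-n^2) = a₀^2 ∨ m*n*(m^2-n^2) = -(a₀^2) := by
          have hfac : (m*n*(m^2-n^2) - a₀^2) * (m*n*(m^2-n^2) + a₀^2) = 0 := by
            linear_combination hk2
          rcases mul_eq_zero.mp hfac with h|h
          · left; linarith
          · right; linarith
        have hsq : ∃ w, m*n = w^2 ∨ m*n = -(w^2) := by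
          rcases hk_eq with h|h
          · obtain ⟨w, hw⟩ := Int.sq_of_isCoprime hcop1 h
            exact ⟨w, hw⟩
          · have hcop1' : IsCoprime (m*n) (n^2-m^2) := by
              have := hcop1.neg_right
              rwa [show -(m^2-n^2) = n^2-m^2 by ring] at this
            obtain ⟨w, hw⟩ := Int.sq_of_isCoprime hcop1'
              (show (m*n)*(n^2-m^2) = a₀^2 by linear_combination -h)
            exact ⟨w, hw⟩
        have hg2 : ∃ g, m^2 - n^2 = g^2 ∨ m^2 - n^2 = -(g^2) := by
          rcases hk_eq with h|h
          · obtain ⟨g, hg⟩ := Int.sq_of_isCoprime hcop1.symm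
              (show (m^2-n^2)*(m*n) = a₀^2 by linear_combination h)
            exact ⟨g, hg⟩
          · obtain ⟨g, hg⟩ := Int.sq_of_isCoprime (hcop1.symm.neg_left)
              (show (-(m^2-n^2))*(m*n) = a₀^2 by linear_combination -h)
            rcases hg with h'|h'
            · exact ⟨g, Or.inr (by linarith)⟩
            · exact ⟨g, Or.inl (by linarith)⟩
        obtain ⟨g, hg⟩ := hg2
        obtain ⟨w, hw⟩ := hsq
        have hef : ∃ e f : ℤ, m^2 = e^4 ∧ n^2 = f^4 := by
          rcases hw with h|h
          · obtain ⟨e, he⟩ := Int.sq_of_isCoprime hmn h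
            obtain ⟨f, hf⟩ := Int.sq_of_isCoprime hmn.symm (by rw [mul_comm]; exact h)
            refine ⟨e, f, ?_, ?_⟩
            · rcases he with h'|h' <;> rw [h'] <;> ring
            · rcases hf with h'|h' <;> rw [h'] <;> ring
          · have hmn' : IsCoprime m (-n) := hmn.neg_right
            obtain ⟨e, he⟩ := Int.sq_of_isCoprime hmn'
              (show m*(-n) = w^2 by linear_combination -h)
            obtain ⟨f, hf⟩ := Int.sq_of_isCoprime hmn'.symm
              (show (-n)*m = w^2 by linear_combination -h)
            refine ⟨e, f, ?_, ?_⟩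
            · rcases he with h'|h' <;> rw [h'] <;> ring
            · rcases hf with h'|h'
              · have : n = -(f^2) := by linarith
                rw [this]; ring
              · have : n = f^2 := by linarith
                rw [this]; ring
        obtain ⟨e, f, hm2, hn2⟩ := hef
        have he0 : e ≠ 0 := by
          intro h0
          apply hm0
          have hm20 : m^2 = 0 := by rw [hm2, h0]; ring
          exact pow_eq_zero_iff (two_ne_zero) |>.mp hm20
        have hf0 : f ≠ 0 := by
          intro h0
          apply hn0
          have hn20 : n^2 = 0 := by rw [hn2, h0]; ring
          exact pow_eq_zero_iff (two_ne_zero) |>.mp hn20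
        have hg0 : g ≠ 0 := by
          intro h0
          apply hmn20
          rcases hg with h'|h' <;> rw [h', h0] <;> ring
        have hc4 : c^4 = (m^2+n^2)^4 := by rcases hczz with h'|h' <;> rw [h'] <;> ring
        have hn1 : 1 ≤ n^2 := by have : 0 < n^2 := by positivity
                                 omega
        have hm1 : 1 ≤ m^2 := by have : 0 < m^2 := by positivity
                                 omega
        have hSle : (m^2+n^2) ≤ (m^2+n^2)^4 := le_self_pow₀ (by linarith) (by norm_num)
        have hmlt : m^2 < c^4 := by rw [hc4]; linarith
        have hnlt : n^2 < c^4 := by rw [hc4]; linarith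
        rcases hg with hg'|hg'
        · have heq2 : f^4 + g^2 = e^4 := by linear_combination -hg' + hm2 - hn2
          have helt : e^4 < c^4 := by rw [← hm2]; exact hmlt
          exact ih e.natAbs (hn ▸ natAbs_lt_of_pow4 helt) f g e rfl hf0 hg0 heq2
        · have heq2 : e^4 + g^2 = f^4 := by linear_combination -hm2 + hn2 + hg'
          have hflt : f^4 < c^4 := by rw [← hn2]; exact hnlt
          exact ih f.natAbs (hn ▸ natAbs_lt_of_pow4 hflt) e g f rfl he0 hg0 heq2
      · -- case (ii): a odd, b even
        have hbe : Even b := by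
          have h2 : Even (b^2) := by
            have hb2eq : b^2 = c^4 - a^4 := by linarith
            rw [hb2eq]
            exact (hcodd.pow).sub_odd (haodd.pow)
          exact (Int.even_pow.mp h2).1
        obtain ⟨b₀, hb₀⟩ := hbe
        obtain ⟨P, hP⟩ : Even (c^2 - a^2) := (hcodd.pow).sub_odd (haodd.pow)
        obtain ⟨Q, hQ⟩ : Even (c^2 + a^2) := (hcodd.pow).add_odd (haodd.pow)
        have hQP1 : Q - P = a^2 := by linarith
        have hQP2 : Q + P = c^2 := by linarith
        have h1 : P * Q = b₀^2 := by
          apply mul_left_cancel₀ (show (4:ℤ) ≠ 0 by norm_num)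
          have hPQprod : (c^2-a^2)*(c^2+a^2) = (P+P)*(Q+Q) := by rw [hP, hQ]
          have hbb : b*b = (b₀+b₀)*(b₀+b₀) := by rw [hb₀]
          linear_combination -hPQprod - heq + hbb
        have hcoPQ : IsCoprime P Q := coprime_shift (by rw [hQP1, hQP2]; exact hco.pow)
        have hb₀0 : b₀ ≠ 0 := by rintro rfl; simp at hb₀; exact hb hb₀
        have hPQpos : 0 < P * Q := by rw [h1]; positivity
        have hc2pos : 0 < c^2 := by positivity
        have hQpos : 0 < Q := by nlinarith [sq_nonneg a]
        have hPpos : 0 < P := by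
          rcases mul_pos_iff.mp hPQpos with ⟨h,_⟩|⟨_,h⟩
          · exact h
          · linarith
        obtain ⟨u, hu⟩ := Int.sq_of_isCoprime hcoPQ h1
        have hPu : P = u^2 := by
          rcases hu with h|h
          · exact h
          · exfalso; linarith [sq_nonneg u]
        obtain ⟨v, hv⟩ := Int.sq_of_isCoprime hcoPQ.symm (by rw [mul_comm]; exact h1)
        have hQv : Q = v^2 := by
          rcases hv with h|h
          · exact h
          · exfalso; linarith [sq_nonneg v]
        have hequ : u^4 + (a*c)^2 = v^4 := by
          have hQQ : (Q-P)*(Q+P) = a^2*c^2 := by rw [hQP1, hQP2]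
          linear_combination -hQQ - (P + u^2) * hPu + (Q + v^2) * hQv
        have hu0 : u ≠ 0 := by rintro rfl; simp at hPu; omega
        have hQlt : Q < c^2 := by linarith
        have hlt : v^4 < c^4 := by
          have h9 : Q^2 < (c^2)^2 := by
            apply pow_lt_pow_left₀ hQlt (le_of_lt hQpos)
            norm_num
          calc v^4 = Q^2 := by rw [hQv]; ring
            _ < (c^2)^2 := h9
            _ = c^4 := by ring
        exact ih v.natAbs (hn ▸ natAbs_lt_of_pow4 hlt) u (a*c) v rfl hu0
          (mul_ne_zero ha hc) hequ
  · -- non-coprime: divide out the gcd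
    obtain ⟨a₁, ha₁⟩ : ((Int.gcd a c : ℤ)) ∣ a := Int.gcd_dvd_left a c
    obtain ⟨c₁, hc₁⟩ : ((Int.gcd a c : ℤ)) ∣ c := Int.gcd_dvd_right a c
    set g : ℤ := (Int.gcd a c : ℤ) with hgdef
    have hg0 : g ≠ 0 := by
      simp only [hgdef, ne_eq, Int.natCast_eq_zero, Int.gcd_eq_zero_iff]
      tauto
    have hbdvd : g ^ 2 ∣ b := by
      have h2 : (g ^ 2) ^ 2 ∣ b ^ 2 := ⟨c₁ ^ 4 - a₁ ^ 4, by
        rw [ha₁] at heq; rw [hc₁] at heq; linear_combination heq⟩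
      exact (Int.pow_dvd_pow_iff two_ne_zero).mp h2
    obtain ⟨b₁, hb₁⟩ := hbdvd
    have heq' : a₁ ^ 4 + b₁ ^ 2 = c₁ ^ 4 := by
      have h4 : g ^ 4 ≠ 0 := pow_ne_zero _ hg0
      apply mul_left_cancel₀ h4
      rw [ha₁, hb₁, hc₁] at heq
      linear_combination heq
    have hc₁0 : c₁ ≠ 0 := by rintro rfl; simp at hc₁; exact hc hc₁
    have ha₁0 : a₁ ≠ 0 := by rintro rfl; simp at ha₁; exact ha ha₁
    have hb₁0 : b₁ ≠ 0 := by rintro rfl; simp at hb₁; exact hb hb₁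
    have hglt : c₁.natAbs < n := by
      have h2 : 2 ≤ g.natAbs := by
        rcases Nat.lt_or_ge g.natAbs 2 with h | h
        · interval_cases h' : g.natAbs
          · exact absurd (Int.natAbs_eq_zero.mp h') hg0
          · exact absurd (by simpa [hgdef] using h') hg1
        · exact h
      have hsplit : c.natAbs = g.natAbs * c₁.natAbs := by rw [hc₁, Int.natAbs_mul]
      have hc₁pos : 0 < c₁.natAbs := Int.natAbs_pos.mpr hc₁0
      have hmul : 2 * c₁.natAbs ≤ g.natAbs * c₁.natAbs := Nat.mul_le_mul_right _ h2
      omega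
    exact ih c₁.natAbs hglt a₁ b₁ c₁ rfl ha₁0 hb₁0 heq'

private lemma no_solution (a b c : ℤ) (ha : a ≠ 0) (hb : b ≠ 0) : a^4 + b^2 ≠ c^4 :=
  fun h => descent c.natAbs a b c rfl ha hb h

private lemma helper_factor {p d : ℤ} (hdpos : 0 < d) (hco : IsCoprime p d) {x : ℤ}
    (hxd : d ∣ x - p) (h2 : x^2 = 2*d^2) : False := by
  have hd2 : d^2 ∣ x^2 := ⟨2, by linear_combination h2⟩
  have hdx : d ∣ x := (Int.pow_dvd_pow_iff two_ne_zero).mp hd2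
  have hdp : d ∣ p := by
    have := dvd_sub hdx hxd
    simpa using this
  have hd1 : d = 1 := by
    have hu : IsUnit d := hco.isUnit_of_dvd' hdp (dvd_refl d)
    rw [Int.isUnit_iff] at hu
    omega
  rw [hd1] at h2
  norm_num at h2
  have h1 : -1 ≤ x := by nlinarith [sq_nonneg (x+1)]
  have h3 : x ≤ 1 := by nlinarith [sq_nonneg (x-1)]
  interval_cases x <;> norm_num at h2

/-- The only rational points on `z² = (s² + 2s - 1)(s² - 2s - 1)` are the trivial ones:
`s = 0` (and then `z = ±1`). -/
theorem rational_points_quartic_32a2 (s z : ℚ)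
    (h : z ^ 2 = (s ^ 2 + 2 * s - 1) * (s ^ 2 - 2 * s - 1)) :
    s = 0 := by
  by_contra hs
  have hp0 : s.num ≠ 0 := Rat.num_ne_zero.mpr hs
  set p : ℤ := s.num with hp
  set d : ℤ := (s.den : ℤ) with hd
  have hdenpos : 0 < s.den := s.pos
  have hdpos : 0 < d := by rw [hd]; exact_mod_cast hdenpos
  have hd0 : d ≠ 0 := ne_of_gt hdpos
  have hco : IsCoprime p d := by
    rw [Int.isCoprime_iff_gcd_eq_one]
    have : p.natAbs.gcd d.natAbs = 1 := by
      rw [hd, Int.natAbs_natCast]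
      exact s.reduced
    exact this
  have hsd : (s : ℚ) = (p:ℚ)/(d:ℚ) := (Rat.num_div_den s).symm
  set w : ℚ := z * ((d:ℚ)^2) with hw
  have key : w^2 = (((p^2+2*p*d-d^2)*(p^2-2*p*d-d^2) : ℤ) : ℚ) := by
    rw [hw, mul_pow, h, hsd]
    have hdQ : ((d:ℚ)) ≠ 0 := by exact_mod_cast hd0
    field_simp
    push_cast
    ring
  have hwden : w.den = 1 := by
    have h1 : (w^2).den = 1 := by rw [key]; exact Rat.den_intCast _
    have h2 : (w^2).den = w.den^2 := Rat.den_pow w 2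
    have h3 : w.den^2 = 1 := by rw [← h2, h1]
    nlinarith [w.pos]
  obtain ⟨r, hr⟩ : ∃ r : ℤ, (r : ℚ) = w := ⟨w.num, by rw [← Rat.num_div_den w, hwden]; simp⟩
  have hrZ : r^2 = (p^2+2*p*d-d^2)*(p^2-2*p*d-d^2) := by
    have hcast : ((r^2 : ℤ) : ℚ) = (((p^2+2*p*d-d^2)*(p^2-2*p*d-d^2) : ℤ) : ℚ) := by
      push_cast
      rw [hr]
      push_cast at key
      exact key
    exact_mod_cast hcast
  rcases eq_or_ne r 0 with hr0 | hr0
  · rw [hr0] at hrZ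
    rcases mul_eq_zero.mp hrZ.symm with hf | hf
    · exact helper_factor hdpos hco (x := p + d) ⟨1, by ring⟩ (by linear_combination hf)
    · exact helper_factor hdpos hco (x := p - d) ⟨-1, by ring⟩ (by linear_combination hf)
  · apply no_solution (2*p*d) (r*(p^2+d^2)) (p^2-d^2)
      (by positivity) (mul_ne_zero hr0 (by positivity))
    linear_combination ((p^2+d^2)^2) * hrZ
end

section
/- For m, z ∈ ℚ: if z² = (m + 1)(m + 2)(m + 3), then z = 0 (so m ∈ {−1, −2, −3}); and likewise if z² = −(m + 1)(m + 2)(m + 3), then z = 0. -/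
/-- Core descent step: from `m = c²`, `n = d²`, `b² = m² - n²` we get a smaller
solution of `X⁴ = Y⁴ + Z²`. -/
private lemma descent_core (N : ℕ) (m n b : ℤ) (hm : 0 < m) (hn : 0 < n)
    (hco : IsCoprime m n) (a : ℤ) (hmn : m * n = a ^ 2) (hb : b ≠ 0)
    (hb2 : b ^ 2 = m ^ 2 - n ^ 2) (hsize : m ^ 2 + n ^ 2 ≤ (N : ℤ))
    (IH : ∀ x' y' z' : ℤ, x'.natAbs < N → x' ^ 4 = y' ^ 4 + z' ^ 2 → y' = 0 ∨ z' = 0) :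
    False := by
  obtain ⟨c, hc⟩ := Int.sq_of_isCoprime hco hmn
  have hmc : m = c ^ 2 := by
    rcases hc with h | h
    · exact h
    · exfalso; nlinarith [sq_nonneg c]
  obtain ⟨d, hd⟩ := Int.sq_of_isCoprime hco.symm (by linarith [hmn] : n * m = a ^ 2)
  have hnd : n = d ^ 2 := by
    rcases hd with h | h
    · exact h
    · exfalso; nlinarith [sq_nonneg d]
  have hc0 : c ≠ 0 := by rintro rfl; simp at hmc; omega
  have hd0 : d ≠ 0 := by rintro rfl; simp at hnd; omega
  have heq : c ^ 4 = d ^ 4 + b ^ 2 := by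
    have h1 : (c ^ 2) ^ 2 = (d ^ 2) ^ 2 + b ^ 2 := by rw [← hmc, ← hnd]; linarith
    nlinarith [h1]
  have hlt : c.natAbs < N := by
    have h1 : (c.natAbs : ℤ) = |c| := (Int.abs_eq_natAbs c).symm
    have h2 : (c.natAbs : ℤ) ^ 4 = c ^ 4 := by
      rw [h1, ← abs_pow]; exact abs_of_nonneg (by positivity)
    have h3 : (1 : ℤ) ≤ (c.natAbs : ℤ) := by
      have : c.natAbs ≠ 0 := Int.natAbs_ne_zero.mpr hc0
      omega
    have h4 : (c.natAbs : ℤ) ≤ (c.natAbs : ℤ) ^ 4 := le_self_pow₀ h3 (by norm_num)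
    have h5 : c ^ 4 = m ^ 2 := by rw [hmc]; ring
    have h6 : m ^ 2 < (N : ℤ) := by nlinarith
    have : (c.natAbs : ℤ) < (N : ℤ) := by omega
    exact_mod_cast this
  rcases IH c d b hlt heq with h | h
  · exact hd0 h
  · exact hb h

/-- Second descent step: from `x² = (2a²)² + (b²)²` with coprime `a b`, `b` odd. -/
private lemma descent_step2 (x a b : ℤ) (ha : a ≠ 0) (hb : b ≠ 0) (hbodd : b % 2 = 1)
    (hab : IsCoprime a b) (hx : x ^ 2 = (2 * a ^ 2) ^ 2 + (b ^ 2) ^ 2)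
    (IH : ∀ x' y' z' : ℤ, x'.natAbs < x.natAbs → x' ^ 4 = y' ^ 4 + z' ^ 2 → y' = 0 ∨ z' = 0) :
    False := by
  have hbo : Odd b := Int.odd_iff.mpr hbodd
  have ht : PythagoreanTriple (b ^ 2) (2 * a ^ 2) x := by
    unfold PythagoreanTriple; nlinarith [hx]
  have hb2co : IsCoprime b (2 : ℤ) := by
    obtain ⟨k, hk⟩ := hbo
    exact ⟨1, -k, by linarith⟩
  have hgcd : Int.gcd (b ^ 2) (2 * a ^ 2) = 1 := by
    rw [← Int.isCoprime_iff_gcd_eq_one]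
    have h1 : IsCoprime b (2 * a ^ 2) := hb2co.mul_right (hab.symm.pow_right)
    exact (IsCoprime.pow_left_iff (by norm_num)).mpr h1
  obtain ⟨m, n, h1, h2, h3, _⟩ := PythagoreanTriple.coprime_classification.mp ⟨ht, hgcd⟩
  rcases h1 with ⟨hb2, h2a⟩ | ⟨hb2, _⟩
  swap
  · have heven : Even (b ^ 2) := ⟨m * n, by linarith⟩
    exact (Int.not_odd_iff_even.mpr heven) (hbo.pow)
  · have hmn : m * n = a ^ 2 := by linarith
    have hxabs : m ^ 2 + n ^ 2 ≤ (x.natAbs : ℤ) := by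
      have habs : (x.natAbs : ℤ) = |x| := (Int.abs_eq_natAbs x).symm
      rcases h2 with h | h
      · rw [habs, h]; exact le_abs_self _
      · rw [habs, h, abs_neg]; exact le_abs_self _
    have hmnpos : 0 < m * n := by
      have h0 : a ^ 2 ≠ 0 := pow_ne_zero _ ha
      have h0' : 0 < a ^ 2 := lt_of_le_of_ne (sq_nonneg a) (Ne.symm h0)
      omega
    have hcomn : IsCoprime m n := Int.isCoprime_iff_gcd_eq_one.mpr h3
    rcases pos_and_pos_or_neg_and_neg_of_mul_pos hmnpos with ⟨hm, hn⟩ | ⟨hm, hn⟩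
    · exact descent_core x.natAbs m n b hm hn hcomn a hmn hb hb2 hxabs IH
    · refine descent_core x.natAbs (-m) (-n) b (by omega) (by omega)
        (hcomn.neg_left.neg_right) a (by linarith) hb (by linarith) (by linarith) IH

/-- First descent step in the `y` even case. -/
private lemma descent_stepB (x y m n : ℤ) (hm : 0 < m) (hn : 0 < n)
    (hmeven : m % 2 = 0) (hnodd : n % 2 = 1) (hco : IsCoprime m n)
    (hy : y ^ 2 = 2 * m * n) (hx2 : x ^ 2 = m ^ 2 + n ^ 2)
    (IH : ∀ x' y' z' : ℤ, x'.natAbs < x.natAbs → x' ^ 4 = y' ^ 4 + z' ^ 2 → y' = 0 ∨ z' = 0) :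
    False := by
  obtain ⟨k, hk⟩ : ∃ k, m = 2 * k := ⟨m / 2, by omega⟩
  have hk0 : 0 < k := by omega
  have hyeven : Even y := by
    have hsq : Even (y ^ 2) := ⟨m * n, by linarith⟩
    exact (Int.even_pow.mp hsq).1
  obtain ⟨w, hw⟩ := hyeven
  have hwkn : k * n = w ^ 2 := by
    have h4 : (w + w) ^ 2 = 2 * (2 * k) * n := by rw [← hw, ← hk]; exact hy
    nlinarith [h4]
  have hcokn : IsCoprime k n := by
    have h5 : IsCoprime (2 * k) n := by rw [← hk]; exact hco
    exact IsCoprime.of_mul_left_right h5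
  obtain ⟨a, hha⟩ := Int.sq_of_isCoprime hcokn hwkn
  have hka : k = a ^ 2 := by
    rcases hha with h | h
    · exact h
    · exfalso; nlinarith [sq_nonneg a]
  obtain ⟨b, hhb⟩ := Int.sq_of_isCoprime hcokn.symm (by linarith : n * k = w ^ 2)
  have hnb : n = b ^ 2 := by
    rcases hhb with h | h
    · exact h
    · exfalso; nlinarith [sq_nonneg b]
  have ha0 : a ≠ 0 := by rintro rfl; simp at hka; omega
  have hb0 : b ≠ 0 := by rintro rfl; simp at hnb; omega
  have hbodd : b % 2 = 1 := by
    rcases Int.even_or_odd b with hbe | hbo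
    · exfalso
      obtain ⟨t, ht⟩ := hbe
      have h6 : n = 4 * t ^ 2 := by rw [hnb, ht]; ring
      omega
    · exact Int.odd_iff.mp hbo
  have hab : IsCoprime a b := by
    have h7 : IsCoprime (a ^ 2) (b ^ 2) := by rw [← hka, ← hnb]; exact hcokn
    exact (IsCoprime.pow_iff (by norm_num) (by norm_num)).mp h7
  apply descent_step2 x a b ha0 hb0 hbodd hab _ IH
  rw [hx2, hk, hka, hnb]

/-- Fermat's quartic descent: `x⁴ = y⁴ + z²` forces `y = 0` or `z = 0`. -/
private lemma quartic_aux : ∀ N : ℕ, ∀ x y z : ℤ, x.natAbs ≤ N →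
    x ^ 4 = y ^ 4 + z ^ 2 → y = 0 ∨ z = 0 := by
  intro N
  induction N using Nat.strong_induction_on with
  | _ N IH =>
    intro x y z hxN h
    by_contra hcon
    push_neg at hcon
    obtain ⟨hy, hz⟩ := hcon
    have IH' : ∀ x' y' z' : ℤ, x'.natAbs < x.natAbs → x' ^ 4 = y' ^ 4 + z' ^ 2 →
        y' = 0 ∨ z' = 0 := by
      intro x' y' z' hlt h'
      exact IH x'.natAbs (lt_of_lt_of_le hlt hxN) x' y' z' le_rfl h'
    have hx0 : x ≠ 0 := by
      rintro rfl
      have h1 : 0 < y ^ 4 + z ^ 2 := by positivity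
      simp at h; omega
    have hgpos : 0 < Int.gcd x y := Int.gcd_pos_of_ne_zero_left y hx0
    rcases Nat.lt_or_ge (Int.gcd x y) 2 with hg1 | hg1
    · -- gcd = 1 : coprime case
      have hgcd : Int.gcd x y = 1 := by omega
      have hxy : IsCoprime x y := Int.isCoprime_iff_gcd_eq_one.mpr hgcd
      have ht : PythagoreanTriple (y ^ 2) z (x ^ 2) := by
        unfold PythagoreanTriple; nlinarith [h]
      have hyzco : Int.gcd (y ^ 2) z = 1 := by
        rw [← Int.isCoprime_iff_gcd_eq_one]
        have h1 : IsCoprime (y ^ 4) (x ^ 4) := hxy.symm.pow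
        have h2 : IsCoprime (y ^ 4) (x ^ 4 + y ^ 4 * (-1)) := h1.add_mul_left_right (-1)
        have h3 : x ^ 4 + y ^ 4 * (-1) = z ^ 2 := by linarith
        rw [h3] at h2
        have h4 : IsCoprime y z := by
          have h5 : IsCoprime (y ^ 4) (z ^ 2) := h2
          exact (IsCoprime.pow_iff (by norm_num) (by norm_num)).mp h5
        exact h4.pow_left
      obtain ⟨m, n, h1, h2, h3, hpar⟩ := PythagoreanTriple.coprime_classification.mp ⟨ht, hyzco⟩
      have hx2 : x ^ 2 = m ^ 2 + n ^ 2 := by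
        rcases h2 with h' | h'
        · exact h'
        · exfalso
          have hxx : 0 < x ^ 2 := by positivity
          nlinarith [sq_nonneg m, sq_nonneg n]
      rcases h1 with ⟨hy2, hz2⟩ | ⟨hy2, hz2⟩
      · -- case A : z = 2mn
        have hn0 : n ≠ 0 := by rintro rfl; simp at hz2; exact hz hz2
        have hlt : m.natAbs < x.natAbs := by
          have hmx : m ^ 2 < x ^ 2 := by
            have : 0 < n ^ 2 := lt_of_le_of_ne (sq_nonneg n) (Ne.symm (pow_ne_zero _ hn0))
            linarith
          have h5 : (m.natAbs : ℤ) ^ 2 < (x.natAbs : ℤ) ^ 2 := by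
            rwa [← Int.abs_eq_natAbs, ← Int.abs_eq_natAbs, ← abs_pow, ← abs_pow,
              abs_of_nonneg (sq_nonneg m), abs_of_nonneg (sq_nonneg x)]
          by_contra hcc
          push_neg at hcc
          have h6 : (x.natAbs : ℤ) ≤ (m.natAbs : ℤ) := by exact_mod_cast hcc
          nlinarith [h6, Int.ofNat_nonneg x.natAbs]
        have heq : m ^ 4 = n ^ 4 + (x * y) ^ 2 := by
          have e1 : (x * y) ^ 2 = (m ^ 2 + n ^ 2) * (m ^ 2 - n ^ 2) := by
            rw [mul_pow, hx2, hy2]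
          rw [e1]; ring
        rcases IH' m n (x * y) hlt heq with h' | h'
        · exact hn0 h'
        · rcases mul_eq_zero.mp h' with h'' | h''
          · exact hx0 h''
          · exact hy h''
      · -- case B : y² = 2mn
        have hy2' : y ^ 2 = 2 * m * n := hy2
        have hmnpos : 0 < m * n := by
          have h0 : 0 < y ^ 2 := lt_of_le_of_ne (sq_nonneg y) (Ne.symm (pow_ne_zero _ hy))
          linarith
        have hcomn : IsCoprime m n := Int.isCoprime_iff_gcd_eq_one.mpr h3
        rcases pos_and_pos_or_neg_and_neg_of_mul_pos hmnpos with ⟨hm, hn⟩ | ⟨hm, hn⟩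
        · rcases hpar with ⟨hme, hno⟩ | ⟨hmo, hne⟩
          · exact descent_stepB x y m n hm hn hme hno hcomn hy2' hx2 IH'
          · exact descent_stepB x y n m hn hm hne hmo hcomn.symm (by linarith) (by linarith) IH'
        · rcases hpar with ⟨hme, hno⟩ | ⟨hmo, hne⟩
          · exact descent_stepB x y (-m) (-n) (by omega) (by omega) (by omega) (by omega)
              (hcomn.neg_left.neg_right) (by linarith) (by linarith) IH'
          · exact descent_stepB x y (-n) (-m) (by omega) (by omega) (by omega) (by omega)
              (hcomn.symm.neg_left.neg_right) (by linarith) (by linarith) IH'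
    · -- gcd > 1 : divide out
      set g : ℤ := (Int.gcd x y : ℤ) with hgdef
      have hg2 : (2 : ℤ) ≤ g := by
        have : (2:ℕ) ≤ Int.gcd x y := hg1
        rw [hgdef]; exact_mod_cast this
      have hg0 : g ≠ 0 := by omega
      obtain ⟨x1, hx1⟩ : g ∣ x := Int.gcd_dvd_left x y
      obtain ⟨y1, hy1⟩ : g ∣ y := Int.gcd_dvd_right x y
      have hzdvd : (g ^ 2) ^ 2 ∣ z ^ 2 := by
        refine ⟨x1 ^ 4 - y1 ^ 4, ?_⟩
        have hz2 : z ^ 2 = x ^ 4 - y ^ 4 := by linarith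
        rw [hz2, hx1, hy1]; ring
      obtain ⟨z1, hz1⟩ : g ^ 2 ∣ z := (Int.pow_dvd_pow_iff (by norm_num : 2 ≠ 0)).mp hzdvd
      have heq1 : x1 ^ 4 = y1 ^ 4 + z1 ^ 2 := by
        have hg4 : g ^ 4 ≠ 0 := pow_ne_zero _ hg0
        have hmul : g ^ 4 * x1 ^ 4 = g ^ 4 * (y1 ^ 4 + z1 ^ 2) := by
          have hh : (g * x1) ^ 4 = (g * y1) ^ 4 + (g ^ 2 * z1) ^ 2 := by
            rw [← hx1, ← hy1, ← hz1]; exact h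
          nlinarith [hh]
        exact mul_left_cancel₀ hg4 hmul
      have hx10 : x1 ≠ 0 := by rintro rfl; simp at hx1; exact hx0 hx1
      have hlt : x1.natAbs < x.natAbs := by
        have h1 : x.natAbs = g.natAbs * x1.natAbs := by rw [hx1, Int.natAbs_mul]
        have h2 : 2 ≤ g.natAbs := by omega
        have h3 : x1.natAbs ≠ 0 := Int.natAbs_ne_zero.mpr hx10
        calc x1.natAbs < 2 * x1.natAbs := by omega
          _ ≤ g.natAbs * x1.natAbs := Nat.mul_le_mul_right _ h2
          _ = x.natAbs := h1.symm
      rcases IH' x1 y1 z1 hlt heq1 with h' | h'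
      · exact hy (by rw [hy1, h', mul_zero])
      · exact hz (by rw [hz1, h', mul_zero])

private lemma quartic (x y z : ℤ) (h : x ^ 4 = y ^ 4 + z ^ 2) : y = 0 ∨ z = 0 :=
  quartic_aux x.natAbs x y z le_rfl h

/-- Rational points on `y² = x³ - x` have `y = 0`. -/
private lemma rat_curve (x z : ℚ) (h : z ^ 2 = x ^ 3 - x) : z = 0 := by
  by_contra hz
  obtain ⟨p, hp⟩ : ∃ p : ℤ, x.num = p := ⟨_, rfl⟩
  obtain ⟨q, hq⟩ : ∃ q : ℤ, (x.den : ℤ) = q := ⟨_, rfl⟩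
  have hq0 : 0 < q := by rw [← hq]; exact_mod_cast x.pos
  have hgcd : Int.gcd p q = 1 := by
    rw [← hp, ← hq]
    simpa [Int.gcd] using x.reduced
  have hpq : IsCoprime p q := Int.isCoprime_iff_gcd_eq_one.mpr hgcd
  have hden : ((x.den : ℚ)) ≠ 0 := Nat.cast_ne_zero.mpr x.den_nz
  have hp' : (p : ℚ) = x * (q : ℚ) := by
    rw [← hp, ← hq]
    push_cast
    calc (x.num : ℚ) = (x.num : ℚ) / (x.den : ℚ) * (x.den : ℚ) :=
          (div_mul_cancel₀ _ hden).symm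
      _ = x * (x.den : ℚ) := by rw [Rat.num_div_den]
  have hqQ : ((q : ℚ)) ≠ 0 := by
    rw [← hq]; push_cast; exact hden
  obtain ⟨Y, hY⟩ : ∃ Y : ℚ, z * (q : ℚ) ^ 2 = Y := ⟨_, rfl⟩
  have hY2 : Y ^ 2 = ((p * q * (p - q) * (p + q) : ℤ) : ℚ) := by
    rw [← hY]
    push_cast
    rw [hp']
    linear_combination (q : ℚ) ^ 4 * h
  have hYden : Y.den = 1 := by
    have h1 : (Y * Y).den = Y.den * Y.den := Rat.mul_self_den Y
    have h2 : Y * Y = ((p * q * (p - q) * (p + q) : ℤ) : ℚ) := by rw [← hY2]; ring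
    rw [h2, Rat.den_intCast] at h1
    exact Nat.eq_one_of_mul_eq_one_right h1.symm
  obtain ⟨w, hw⟩ : ∃ w : ℤ, Y.num = w := ⟨_, rfl⟩
  have hYint : (w : ℚ) = Y := by rw [← hw]; exact (Rat.den_eq_one_iff Y).mp hYden
  have hwN : w ^ 2 = p * q * (p - q) * (p + q) := by
    rw [← hYint] at hY2
    exact_mod_cast hY2
  have hY0 : Y ≠ 0 := by
    rw [← hY]
    exact mul_ne_zero hz (pow_ne_zero _ hqQ)
  have hw0 : w ≠ 0 := by
    rintro rfl
    exact hY0 (by exact_mod_cast hYint.symm)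
  have hN0 : p * q * (p - q) * (p + q) ≠ 0 := by
    rw [← hwN]; exact pow_ne_zero _ hw0
  have hp0 : p ≠ 0 := by rintro rfl; simp at hN0
  have hpmq : p - q ≠ 0 := by rintro h0; rw [h0] at hN0; simp at hN0
  have hppq : p + q ≠ 0 := by rintro h0; rw [h0] at hN0; simp at hN0
  -- coprimality of the two factors
  have h1 : IsCoprime p (p - q) := by
    have hh := (hpq.neg_right).add_mul_left_right 1
    rwa [show -q + p * 1 = p - q by ring] at hh
  have h2 : IsCoprime p (p + q) := by
    have hh := hpq.add_mul_left_right 1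
    rwa [show q + p * 1 = p + q by ring] at hh
  have h3 : IsCoprime q (p - q) := by
    have hh := hpq.symm.add_mul_left_right (-1)
    rwa [show p + q * (-1) = p - q by ring] at hh
  have h4 : IsCoprime q (p + q) := by
    have hh := hpq.symm.add_mul_left_right 1
    rwa [show p + q * 1 = p + q by ring] at hh
  have hA : IsCoprime (p * q) ((p - q) * (p + q)) :=
    IsCoprime.mul_left (h1.mul_right h2) (h3.mul_right h4)
  obtain ⟨a, ha⟩ := Int.sq_of_isCoprime hA
    (by linear_combination -hwN : (p * q) * ((p - q) * (p + q)) = w ^ 2)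
  -- extract squares from p and q
  have hcd : ∃ c d : ℤ, (p = c ^ 2 ∨ p = -c ^ 2) ∧ q = d ^ 2 := by
    rcases ha with ha1 | ha1
    · obtain ⟨c, hc⟩ := Int.sq_of_isCoprime hpq ha1
      obtain ⟨d, hd⟩ := Int.sq_of_isCoprime hpq.symm
        (by linear_combination ha1 : q * p = a ^ 2)
      refine ⟨c, d, hc, ?_⟩
      rcases hd with h' | h'
      · exact h'
      · exfalso; nlinarith [sq_nonneg d]
    · obtain ⟨c, hc⟩ := Int.sq_of_isCoprime hpq.neg_right
        (by linear_combination -ha1 : p * (-q) = a ^ 2)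
      obtain ⟨d, hd⟩ := Int.sq_of_isCoprime (hpq.neg_right.symm)
        (by linear_combination -ha1 : (-q) * p = a ^ 2)
      refine ⟨c, d, hc, ?_⟩
      rcases hd with h' | h'
      · exfalso; nlinarith [sq_nonneg d]
      · linarith
  obtain ⟨c, d, hc, hd⟩ := hcd
  have hc0 : c ≠ 0 := by
    rintro rfl
    rcases hc with h' | h' <;> simp at h' <;> exact hp0 h'
  have hd0 : d ≠ 0 := by rintro rfl; simp at hd; omega
  have hp2 : p ^ 2 = c ^ 4 := by rcases hc with h' | h' <;> rw [h'] <;> ring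
  -- second factor
  obtain ⟨b, hb⟩ := Int.sq_of_isCoprime hA.symm
    (by linear_combination -hwN : ((p - q) * (p + q)) * (p * q) = w ^ 2)
  have hb0 : b ≠ 0 := by
    rintro rfl
    have h0 : (p - q) * (p + q) = 0 := by rcases hb with h' | h' <;> simpa using h'
    rcases mul_eq_zero.mp h0 with h'' | h''
    · exact hpmq h''
    · exact hppq h''
  rcases hb with hb1 | hb1
  · -- p² - q² = b², so c⁴ = d⁴ + b²
    have heq : c ^ 4 = d ^ 4 + b ^ 2 := by
      have e1 : p ^ 2 - q ^ 2 = b ^ 2 := by linear_combination hb1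
      have e2 : q ^ 2 = d ^ 4 := by rw [hd]; ring
      linarith [hp2, e1, e2]
    rcases quartic c d b heq with h' | h'
    · exact hd0 h'
    · exact hb0 h'
  · -- q² - p² = b², so d⁴ = c⁴ + b²
    have heq : d ^ 4 = c ^ 4 + b ^ 2 := by
      have e1 : q ^ 2 - p ^ 2 = b ^ 2 := by linear_combination -hb1
      have e2 : q ^ 2 = d ^ 4 := by rw [hd]; ring
      linarith [hp2, e1, e2]
    rcases quartic d c b heq with h' | h'
    · exact hc0 h'
    · exact hb0 h'

/-- For rationals `m, z`: if `z² = (m + 1)(m + 2)(m + 3)` then `z = 0`, and likewise if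
`z² = -(m + 1)(m + 2)(m + 3)` then `z = 0`. -/
theorem rational_points_cubic_32a2 (m z : ℚ) :
    (z ^ 2 = (m + 1) * (m + 2) * (m + 3) → z = 0) ∧
    (z ^ 2 = -((m + 1) * (m + 2) * (m + 3)) → z = 0) := by
  constructor
  · intro h
    exact rat_curve (m + 2) z (by linear_combination h)
  · intro h
    exact rat_curve (-(m + 2)) z (by linear_combination h)
end
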